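/- arXiv:1809.08480 — 5 statements merged into one kernel-verified Lean document; each statement's English description precedes it below -/
import Mathlib

section
/- Suppose Σ ⊆ E^κ_{≥χ} is a stationary set and c : [κ]² → θ is a Σ-closed witness to U(κ, 2, θ, χ). Then for every family A ⊆ [κ]^{<χ} of κ-many pairwise disjoint sets, every club D ⊆ κ, and every i < θ, there exist γ ∈ D, a ∈ A, and ε < γ such that γ < a and c(α,β) > i for all α ∈ (ε, γ) and β ∈ a. -/
open Cardinal Set Ordinal

noncomputable section

/-- `s` (a set in a `Type 1`, such as a set of ordinals) has small cardinality `μ`. -/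
def HasCard {α : Type 1} (s : Set α) (μ : Cardinal.{0}) : Prop :=
  Cardinal.mk s = Cardinal.lift.{1, 0} μ

/-- `a < b` for sets of ordinals: every element of `a` is below every element of `b`. -/
def SetLT (a b : Set Ordinal) : Prop := ∀ α ∈ a, ∀ β ∈ b, α < β

/-- `A` is a family of `κ`-many pairwise disjoint subsets of `κ`, each of cardinality `χ'`. -/
def IsDisjFamily (κ χ' : Cardinal) (A : Set (Set Ordinal)) : Prop :=
  (∀ a ∈ A, a ⊆ Set.Iio κ.ord ∧ HasCard a χ') ∧
    A.PairwiseDisjoint id ∧ HasCard A κ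

/-- `A` is a family of `κ`-many pairwise disjoint subsets of `κ`, each of cardinality `< χ`. -/
def IsDisjFamilyLT (κ χ : Cardinal) (A : Set (Set Ordinal)) : Prop :=
  (∀ a ∈ A, a ⊆ Set.Iio κ.ord ∧ Cardinal.mk a < Cardinal.lift.{1, 0} χ) ∧
    A.PairwiseDisjoint id ∧ HasCard A κ

/-- `c` is a coloring of pairs of ordinals below `κ` with colors `< θ`. -/
def IsColoring (κ θ : Cardinal) (c : Ordinal → Ordinal → Ordinal) : Prop :=
  ∀ α β : Ordinal, α < β → β < κ.ord → c α β < θ.ord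

/-- `c` witnesses `U(κ, μ, θ, χ)`. -/
def WitnessU (κ μ θ χ : Cardinal) (c : Ordinal → Ordinal → Ordinal) : Prop :=
  IsColoring κ θ c ∧
    ∀ χ' < χ, ∀ A : Set (Set Ordinal), IsDisjFamily κ χ' A →
      ∀ i < θ.ord, ∃ B ⊆ A, HasCard B μ ∧
        ∀ a ∈ B, ∀ b ∈ B, SetLT a b → ∀ α ∈ a, ∀ β ∈ b, i < c α β

/-- The principle `U(κ, μ, θ, χ)`. -/
def U (κ μ θ χ : Cardinal) : Prop := ∃ c, WitnessU κ μ θ χ c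

/-- `D` is a club in (the ordinal) `o`: a closed and unbounded subset of `o`. -/
def IsClubOrd (D : Set Ordinal) (o : Ordinal) : Prop :=
  D ⊆ Set.Iio o ∧ (∀ α < o, ∃ β ∈ D, α ≤ β) ∧
    ∀ γ < o, 0 < γ → (∀ x < γ, ∃ β ∈ D, x < β ∧ β < γ) → γ ∈ D

/-- `S` is stationary in `o`: it meets every club in `o`. -/
def IsStationaryOrd (S : Set Ordinal) (o : Ordinal) : Prop :=
  ∀ D, IsClubOrd D o → (S ∩ D).Nonempty

/-- `D^c_{≤i}(β) = {α < β : c (α, β) ≤ i}`. -/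
def DleI (c : Ordinal → Ordinal → Ordinal) (i β : Ordinal) : Set Ordinal :=
  {α | α < β ∧ c α β ≤ i}

/-- `c` is `Σ`-closed: for all `β < κ` and `i ≤ θ`,
`acc⁺(D^c_{≤i}(β)) ∩ Σ ⊆ D^c_{≤i}(β)`. -/
def SigmaClosed (κ θ : Cardinal) (Sig : Set Ordinal)
    (c : Ordinal → Ordinal → Ordinal) : Prop :=
  ∀ β < κ.ord, ∀ i ≤ θ.ord, ∀ γ ∈ Sig, 0 < γ →
    (∀ x < γ, ∃ δ ∈ DleI c i β, x < δ ∧ δ < γ) →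
    (∃ δ ∈ DleI c i β, γ ≤ δ) → γ ∈ DleI c i β

private lemma club_tail {D : Set Ordinal} {o : Ordinal} (ho : Order.IsSuccLimit o)
    (hD : IsClubOrd D o) {ξ : Ordinal} (hξ : ξ < o) : IsClubOrd (D ∩ Set.Ioi ξ) o := by
  obtain ⟨hsub, hunb, hcl⟩ := hD
  refine ⟨fun x hx => hsub hx.1, ?_, ?_⟩
  · intro α hα
    have hm : max α (ξ + 1) < o := by
      refine max_lt hα ?_
      rw [Ordinal.add_one_eq_succ]
      exact ho.succ_lt hξ
    obtain ⟨β, hβD, hβge⟩ := hunb _ hm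
    refine ⟨β, ⟨hβD, ?_⟩, le_trans (le_max_left _ _) hβge⟩
    have : ξ + 1 ≤ β := le_trans (le_max_right _ _) hβge
    rw [Ordinal.add_one_eq_succ] at this
    exact (Order.succ_le_iff).mp this
  · intro γ hγ hγ0 happ
    have hγD : γ ∈ D := by
      refine hcl γ hγ hγ0 (fun x hx => ?_)
      obtain ⟨β, hβ, h1, h2⟩ := happ x hx
      exact ⟨β, hβ.1, h1, h2⟩
    obtain ⟨β, hβ, _, h2⟩ := happ 0 hγ0
    exact ⟨hγD, lt_trans hβ.2 h2⟩

private lemma bdd_of_card_lt_cof {o : Ordinal} (ho : 0 < o) {s : Set Ordinal}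
    (hs : ∀ x ∈ s, x < o) (hcard : Cardinal.mk s < Cardinal.lift.{1, 0} o.cof) :
    ∃ b, b < o ∧ ∀ x ∈ s, x ≤ b := by
  have hle : Cardinal.mk s ≤ Cardinal.lift.{1, 0} o.cof := hcard.le
  obtain ⟨μ, hμ⟩ := Cardinal.mem_range_lift_of_le hle
  have hμlt : μ < o.cof := by
    rw [← Cardinal.lift_lt (a := μ)]
    rw [hμ]; exact hcard
  have hmkout : Cardinal.mk (ULift.{1, 0} μ.out) = Cardinal.mk s := by
    rw [Cardinal.mk_uLift, Cardinal.mk_out]; exact hμ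
  obtain ⟨e⟩ := Cardinal.eq.mp hmkout
  set f : μ.out → Ordinal := fun x => ((e ⟨x⟩ : s) : Ordinal) with hf
  have hflt : ∀ x, f x < o := fun x => hs _ (e ⟨x⟩).2
  have hsup : iSup f < o := by
    refine Ordinal.iSup_lt_ord ?_ hflt
    rw [Cardinal.mk_out]; exact hμlt
  refine ⟨iSup f, hsup, fun x hx => ?_⟩
  have : f ((e.symm ⟨x, hx⟩).down) = x := by
    simp only [hf]
    have : (⟨(e.symm ⟨x, hx⟩).down⟩ : ULift.{1,0} μ.out) = e.symm ⟨x, hx⟩ := rfl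
    rw [this, Equiv.apply_symm_apply]
  rw [← this]
  exact le_ciSup (Ordinal.bddAbove_range f) _

private lemma regular_pigeonhole {κ χ : Cardinal.{0}} (hκ : κ.IsRegular) (hχκ : χ < κ)
    {α : Type 1} (X : Set α) (hX : Cardinal.mk X = Cardinal.lift.{1, 0} κ)
    (g : α → Ordinal) (hg : ∀ x ∈ X, g x < χ.ord) :
    ∃ j, j < χ.ord ∧ Cardinal.mk {x | x ∈ X ∧ g x = j} = Cardinal.lift.{1, 0} κ := by
  by_contra hcon
  push_neg at hcon
  -- each fiber has size < lift κ
  have hfib : ∀ j, j < χ.ord → Cardinal.mk {x | x ∈ X ∧ g x = j} < Cardinal.lift.{1, 0} κ := by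
    intro j hj
    refine lt_of_le_of_ne ?_ (hcon j hj)
    calc Cardinal.mk {x | x ∈ X ∧ g x = j} ≤ Cardinal.mk X :=
          Cardinal.mk_le_mk_of_subset (fun x hx => hx.1)
      _ = _ := hX
  set ι := ↥(Set.Iio χ.ord) with hι
  have hmkι : Cardinal.mk ι = Cardinal.lift.{1, 0} χ := by
    rw [hι, Ordinal.mk_Iio_ordinal, Cardinal.card_ord]
  set ψ : ↥X → ι := fun x => ⟨g x.1, hg _ x.2⟩ with hψ
  -- X is the union of the fibers of ψ
  have hXsum : Cardinal.mk ↥X = Cardinal.sum (fun j : ι => Cardinal.mk {x : ↥X // ψ x = j}) := by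
    rw [← Cardinal.mk_sigma]
    exact (Cardinal.mk_congr (Equiv.sigmaFiberEquiv ψ)).symm
  -- each subtype fiber equals the set fiber
  have hfibeq : ∀ j : ι, Cardinal.mk {x : ↥X // ψ x = j}
      = Cardinal.mk {x | x ∈ X ∧ g x = j.1} := by
    intro j
    refine Cardinal.mk_congr ?_
    refine ⟨fun p => ⟨p.1.1, p.1.2, ?_⟩, fun q => ⟨⟨q.1, q.2.1⟩, ?_⟩, ?_, ?_⟩
    · have := congrArg Subtype.val p.2
      simpa [hψ] using this
    · exact Subtype.ext q.2.2
    · rintro ⟨⟨x, hx⟩, hpx⟩; rfl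
    · rintro ⟨x, hx⟩; rfl
  -- choose cardinals μ j with lift μ j = fiber card
  have hμ : ∀ j : ι, ∃ μ : Cardinal.{0}, Cardinal.lift.{1, 0} μ
      = Cardinal.mk {x | x ∈ X ∧ g x = j.1} ∧ μ < κ := by
    intro j
    obtain ⟨μ, hμ⟩ := Cardinal.mem_range_lift_of_le (hfib j.1 j.2).le
    exact ⟨μ, hμ, by rw [← Cardinal.lift_lt (a := μ), hμ]; exact hfib j.1 j.2⟩
  choose μ hμeq hμlt using hμ
  -- common bound for the μ j
  have hbdd : ∃ b, b < κ.ord ∧ ∀ x ∈ Set.range (fun j : ι => (μ j).ord), x ≤ b := by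
    refine bdd_of_card_lt_cof ?_ ?_ ?_
    · exact (Cardinal.isSuccLimit_ord hκ.aleph0_le).pos
    · rintro x ⟨j, rfl⟩
      exact Cardinal.ord_lt_ord.mpr (hμlt j)
    · rw [hκ.cof_eq]
      calc Cardinal.mk ↥(Set.range (fun j : ι => (μ j).ord)) ≤ Cardinal.mk ι :=
            Cardinal.mk_range_le
        _ = Cardinal.lift.{1,0} χ := hmkι
        _ < _ := Cardinal.lift_lt.mpr hχκ
  obtain ⟨b, hbκ, hble⟩ := hbdd
  set cb := b.card with hcb
  have hcbκ : cb < κ := Cardinal.lt_ord.mp hbκ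
  have hμle : ∀ j : ι, μ j ≤ cb := by
    intro j
    have h1 : (μ j).ord ≤ b := hble _ ⟨j, rfl⟩
    have := Ordinal.card_le_card h1
    rwa [Cardinal.card_ord] at this
  have hfinal : Cardinal.mk ↥X < Cardinal.lift.{1, 0} κ := by
    calc Cardinal.mk ↥X
        = Cardinal.sum (fun j : ι => Cardinal.mk {x : ↥X // ψ x = j}) := hXsum
      _ ≤ Cardinal.sum (fun _ : ι => Cardinal.lift.{1, 0} cb) := by
          refine Cardinal.sum_le_sum _ _ (fun j => ?_)
          rw [hfibeq j, ← hμeq j]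
          exact Cardinal.lift_le.mpr (hμle j)
      _ = Cardinal.mk ι * Cardinal.lift.{1, 0} cb := Cardinal.sum_const' _ _
      _ = Cardinal.lift.{1, 0} χ * Cardinal.lift.{1, 0} cb := by rw [hmkι]
      _ = Cardinal.lift.{1, 0} (χ * cb) := (Cardinal.lift_mul _ _).symm
      _ < Cardinal.lift.{1, 0} κ :=
          Cardinal.lift_lt.mpr (Cardinal.mul_lt_of_lt hκ.aleph0_le hχκ hcbκ)
  rw [hX] at hfinal
  exact lt_irrefl _ hfinal

private lemma exists_chain {κ : Cardinal.{0}} (hκ : κ.IsRegular)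
    {R : Set Ordinal} {B : Set (Set Ordinal)}
    (hRab : ∀ b < κ.ord, ∃ γ, γ ∈ R ∧ b < γ)
    (hRlt : R ⊆ Set.Iio κ.ord)
    (hBab : ∀ ξ, ξ < κ.ord → ∃ a, a ∈ B ∧ ∀ β ∈ a, ξ < β)
    (hBbdd : ∀ γ, ∀ a ∈ B, γ < κ.ord → ∃ ζ, ζ < κ.ord ∧ ∀ x ∈ insert γ a, x < ζ) :
    ∃ G : Ordinal → Ordinal × Set Ordinal,
      (∀ l, l < κ.ord → (G l).1 ∈ R ∧ (G l).2 ∈ B ∧ (∀ β ∈ (G l).2, (G l).1 < β)) ∧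
      (∀ j l, j < l → l < κ.ord →
        ∀ x ∈ insert (G j).1 (G j).2, ∀ y ∈ insert (G l).1 (G l).2, x < y) := by
  classical
  set V := Ordinal × Set Ordinal × Ordinal with hV
  set rob : V → Ordinal := fun p => if p.2.2 < κ.ord then p.2.2 else 0 with hrob
  have hstep : ∀ (l : Ordinal) (g : ∀ j, j < l → V), l < κ.ord → ∃ p : V,
      p.1 ∈ R ∧ p.2.1 ∈ B ∧ (∀ β ∈ p.2.1, p.1 < β) ∧
      (∀ x ∈ insert p.1 p.2.1, x < p.2.2) ∧ p.2.2 < κ.ord ∧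
      ∀ j (hj : j < l), rob (g j hj) < p.1 := by
    intro l g hl
    have hbb : ∃ bb, bb < κ.ord ∧
        ∀ x ∈ Set.range (fun jh : ↥(Set.Iio l) => rob (g jh.1 jh.2)), x ≤ bb := by
      refine bdd_of_card_lt_cof (Cardinal.isSuccLimit_ord hκ.aleph0_le).pos ?_ ?_
      · rintro x ⟨jh, rfl⟩
        simp only [hrob]
        split
        · assumption
        · exact (Cardinal.isSuccLimit_ord hκ.aleph0_le).pos
      · rw [hκ.cof_eq]
        calc Cardinal.mk ↥(Set.range (fun jh : ↥(Set.Iio l) => rob (g jh.1 jh.2)))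
            ≤ Cardinal.mk ↥(Set.Iio l) := Cardinal.mk_range_le
          _ = Cardinal.lift.{1,0} l.card := Ordinal.mk_Iio_ordinal l
          _ < Cardinal.lift.{1,0} κ := Cardinal.lift_lt.mpr (Cardinal.lt_ord.mp hl)
    obtain ⟨bb, hbbκ, hbble⟩ := hbb
    obtain ⟨γ, hγR, hγbb⟩ := hRab bb hbbκ
    have hγκ : γ < κ.ord := hRlt hγR
    obtain ⟨a, haB, haγ⟩ := hBab γ hγκ
    obtain ⟨ζ, hζκ, hζ⟩ := hBbdd γ a haB hγκ
    refine ⟨(γ, a, ζ), hγR, haB, haγ, hζ, hζκ, fun j hj => ?_⟩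
    exact lt_of_le_of_lt (hbble _ ⟨⟨j, hj⟩, rfl⟩) hγbb
  set pick : ∀ l : Ordinal, (∀ j, j < l → V) → V := fun l g =>
    if hl : l < κ.ord then Classical.choose (hstep l g hl) else (0, ∅, 0) with hpick
  set F : Ordinal → V := WellFounded.fix Ordinal.lt_wf pick with hF
  have hFeq : ∀ l, F l = pick l (fun j _ => F j) := by
    intro l
    rw [hF]
    exact WellFounded.fix_eq _ _ _
  have hFspec : ∀ l, l < κ.ord →
      (F l).1 ∈ R ∧ (F l).2.1 ∈ B ∧ (∀ β ∈ (F l).2.1, (F l).1 < β) ∧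
      (∀ x ∈ insert (F l).1 (F l).2.1, x < (F l).2.2) ∧ (F l).2.2 < κ.ord ∧
      ∀ j (hj : j < l), rob (F j) < (F l).1 := by
    intro l hl
    have h1 : F l = Classical.choose (hstep l (fun j _ => F j) hl) := by
      rw [hFeq l, hpick]
      simp only [dif_pos hl]
    rw [h1]
    exact Classical.choose_spec (hstep l (fun j _ => F j) hl)
  refine ⟨fun l => ((F l).1, (F l).2.1), ?_, ?_⟩
  · intro l hl
    obtain ⟨h1, h2, h3, _, _, _⟩ := hFspec l hl
    exact ⟨h1, h2, h3⟩
  · intro j l hjl hl x hx y hy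
    have hjκ : j < κ.ord := hjl.trans hl
    obtain ⟨_, _, h3j, h4j, h5j, _⟩ := hFspec j hjκ
    obtain ⟨_, _, h3l, _, _, h6l⟩ := hFspec l hl
    have hrobj : rob (F j) = (F j).2.2 := by
      simp only [hrob]; rw [if_pos h5j]
    have hζγ : (F j).2.2 < (F l).1 := by
      rw [← hrobj]; exact h6l j hjl
    have hxζ : x < (F j).2.2 := h4j x hx
    have hxl : x < (F l).1 := hxζ.trans hζγ
    rcases Set.mem_insert_iff.mp hy with rfl | hy2
    · exact hxl
    · exact hxl.trans (h3l y hy2)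

private def prodFstFiber {α β : Type 1} (a₀ : α) : {p : α × β // p.1 = a₀} ≃ β where
  toFun p := p.1.2
  invFun b := ⟨(a₀, b), rfl⟩
  left_inv := by rintro ⟨⟨x, y⟩, rfl⟩; rfl
  right_inv b := rfl

private lemma free_pair {κ χ : Cardinal.{0}} (hκ : κ.IsRegular) (hχ : ℵ₀ ≤ χ) (hχκ : χ < κ)
    {T : Set Ordinal} (hT : Cardinal.mk T = Cardinal.lift.{1, 0} κ)
    {A₁ : Set (Set Ordinal)} (hA₁ : Cardinal.mk A₁ = Cardinal.lift.{1, 0} κ)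
    (Host : Ordinal → Set Ordinal → Prop)
    (hcap : ∀ a ∈ A₁, ∀ W : ↥(Set.Iio χ.ord) → Ordinal,
      (∀ j, W j ∈ T ∧ Host (W j) a) → Function.Injective W → False) :
    ∃ R B, R ⊆ T ∧ Cardinal.mk R = Cardinal.lift.{1, 0} κ ∧ B ⊆ A₁ ∧
      Cardinal.mk B = Cardinal.lift.{1, 0} κ ∧ ∀ γ ∈ R, ∀ a ∈ B, ¬ Host γ a := by
  classical
  by_contra hn
  push_neg at hn
  have hχ0 : χ ≠ 0 := (Cardinal.aleph0_pos.trans_le hχ).ne'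
  have hmkeq : Cardinal.mk ↥T = Cardinal.mk (↥(Set.Iio χ.ord) × ↥(Set.Iio κ.ord)) := by
    rw [Cardinal.mk_prod, Cardinal.lift_id, Cardinal.lift_id,
      Ordinal.mk_Iio_ordinal, Ordinal.mk_Iio_ordinal, Cardinal.card_ord, Cardinal.card_ord,
      ← Cardinal.lift_mul, hT, Cardinal.mul_eq_right hκ.aleph0_le hχκ.le hχ0]
  obtain ⟨e⟩ := Cardinal.eq.mp hmkeq
  set S' : Ordinal → Set Ordinal := fun j =>
    if hj : j < χ.ord then Subtype.val '' {t : ↥T | (e t).1 = ⟨j, hj⟩} else ∅ with hS'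
  have hS'sub : ∀ j, S' j ⊆ T := by
    intro j x hx
    simp only [hS'] at hx
    split at hx
    · obtain ⟨t, _, rfl⟩ := hx
      exact t.2
    · exact absurd hx (Set.notMem_empty x)
  have hS'card : ∀ j, ∀ hj : j < χ.ord, Cardinal.mk (S' j) = Cardinal.lift.{1, 0} κ := by
    intro j hj
    have h1 : S' j = Subtype.val '' {t : ↥T | (e t).1 = ⟨j, hj⟩} := by
      simp only [hS', dif_pos hj]
    rw [h1, Cardinal.mk_image_eq Subtype.val_injective]
    have h2 : Cardinal.mk {t : ↥T | (e t).1 = ⟨j, hj⟩} = Cardinal.mk ↥(Set.Iio κ.ord) := by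
      refine Cardinal.mk_congr ?_
      exact (Equiv.subtypeEquiv e (fun t => Iff.rfl)).trans (prodFstFiber ⟨j, hj⟩)
    rw [h2, Ordinal.mk_Iio_ordinal, Cardinal.card_ord]
  have hS'disj : ∀ j j' γ, γ ∈ S' j → γ ∈ S' j' → j = j' := by
    intro j j' γ h1 h2
    simp only [hS'] at h1 h2
    split at h1
    · split at h2
      · obtain ⟨t, ht, hts⟩ := h1
        obtain ⟨t', ht', hts'⟩ := h2
        have : t = t' := Subtype.val_injective (hts.trans hts'.symm)
        rw [this] at ht
        have := ht.symm.trans ht'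
        exact congrArg Subtype.val this
      · exact absurd h2 (Set.notMem_empty γ)
    · exact absurd h1 (Set.notMem_empty γ)
  set Bf : Ordinal → Set (Set Ordinal) := fun j =>
    {a | a ∈ A₁ ∧ ∀ γ ∈ S' j, ¬ Host γ a} with hBfdef
  have hBf : ∀ j, ∀ _ : j < χ.ord, Cardinal.mk (Bf j) < Cardinal.lift.{1, 0} κ := by
    intro j hj
    refine lt_of_le_of_ne ?_ ?_
    · calc Cardinal.mk (Bf j) ≤ Cardinal.mk A₁ :=
        Cardinal.mk_le_mk_of_subset (fun a ha => ha.1)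
      _ = _ := hA₁
    · intro heq
      obtain ⟨γ, hγ, a, ha, hHost⟩ := hn (S' j) (Bf j) (hS'sub j) (hS'card j hj)
        (fun a ha => ha.1) heq
      exact ha.2 γ hγ hHost
  by_cases hex : ∃ a ∈ A₁, ∀ j, j < χ.ord → ∃ γ ∈ S' j, Host γ a
  · obtain ⟨a, haA, hspec⟩ := hex
    set W : ↥(Set.Iio χ.ord) → Ordinal := fun jh =>
      Classical.choose (hspec jh.1 jh.2) with hW
    refine hcap a haA W (fun jh => ?_) ?_
    · obtain ⟨h1, h2⟩ := Classical.choose_spec (hspec jh.1 jh.2)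
      exact ⟨hS'sub jh.1 h1, h2⟩
    · intro j j' hWeq
      have h1 : W j ∈ S' j.1 := (Classical.choose_spec (hspec j.1 j.2)).1
      have h2 : W j' ∈ S' j'.1 := (Classical.choose_spec (hspec j'.1 j'.2)).1
      rw [hWeq] at h1
      exact Subtype.ext (hS'disj j.1 j'.1 _ h1 h2)
  · push_neg at hex
    set g₂ : Set Ordinal → Ordinal := fun a =>
      if h : ∃ j, j < χ.ord ∧ ∀ γ ∈ S' j, ¬ Host γ a then Classical.choose h else 0 with hg₂
    have hg₂lt : ∀ a ∈ A₁, g₂ a < χ.ord := by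
      intro a ha
      obtain ⟨j, hj, hjprop⟩ := hex a ha
      have hh : ∃ j, j < χ.ord ∧ ∀ γ ∈ S' j, ¬ Host γ a := ⟨j, hj, hjprop⟩
      simp only [hg₂, dif_pos hh]
      exact (Classical.choose_spec hh).1
    obtain ⟨j₁, hj₁, hfib⟩ := regular_pigeonhole hκ hχκ A₁ hA₁ g₂ hg₂lt
    have hsub : {a | a ∈ A₁ ∧ g₂ a = j₁} ⊆ Bf j₁ := by
      rintro a ⟨ha, hga⟩
      obtain ⟨j, hj, hjprop⟩ := hex a ha
      have hh : ∃ j, j < χ.ord ∧ ∀ γ ∈ S' j, ¬ Host γ a := ⟨j, hj, hjprop⟩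
      have : g₂ a = Classical.choose hh := by simp only [hg₂, dif_pos hh]
      refine ⟨ha, ?_⟩
      rw [← hga, this]
      exact (Classical.choose_spec hh).2
    have := Cardinal.mk_le_mk_of_subset hsub
    rw [hfib] at this
    exact absurd (this.trans_lt (hBf j₁ hj₁)) (lt_irrefl _)


theorem stmt10 (κ θ χ : Cardinal) (Sig : Set Ordinal)
    (c : Ordinal → Ordinal → Ordinal)
    (hκreg : κ.IsRegular) (hκunc : ℵ₀ < κ) (hθκ : θ ≤ κ)
    (hχ1 : ℵ₀ ≤ χ) (hχ2 : χ < κ)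
    (hSig : Sig ⊆ {α : Ordinal | α < κ.ord ∧ χ ≤ α.cof})
    (hstat : IsStationaryOrd Sig κ.ord)
    (hclosed : SigmaClosed κ θ Sig c)
    (hwit : WitnessU κ 2 θ χ c) :
    ∀ A : Set (Set Ordinal), IsDisjFamilyLT κ χ A →
      ∀ D : Set Ordinal, IsClubOrd D κ.ord → ∀ i < θ.ord,
        ∃ γ ∈ D, ∃ a ∈ A, ∃ ε < γ, (∀ β ∈ a, γ < β) ∧
          ∀ α, ε < α → α < γ → ∀ β ∈ a, i < c α β := by
  classical
  intro A hA D hD i hi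
  by_contra hcon
  push_neg at hcon
  obtain ⟨hAel, hADisj, hAcard⟩ := hA
  have hκord : ℵ₀ ≤ κ := hκreg.aleph0_le
  have hlim : Order.IsSuccLimit κ.ord := Cardinal.isSuccLimit_ord hκord
  have hκpos : 0 < κ.ord := hlim.pos
  -- the set T = Sig ∩ D
  set T : Set Ordinal := Sig ∩ D with hTdef
  have hTsub : T ⊆ Set.Iio κ.ord := fun x hx => (hSig hx.1).1
  have hTunb : ∀ ξ < κ.ord, ∃ γ ∈ T, ξ < γ := by
    intro ξ hξ
    obtain ⟨γ, hγSig, hγD, hγξ⟩ := hstat (D ∩ Set.Ioi ξ) (club_tail hlim hD hξ)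
    exact ⟨γ, ⟨hγSig, hγD⟩, hγξ⟩
  have hTcard : Cardinal.mk T = Cardinal.lift.{1, 0} κ := by
    have hle : Cardinal.mk T ≤ Cardinal.lift.{1, 0} κ := by
      calc Cardinal.mk T ≤ Cardinal.mk ↥(Set.Iio κ.ord) := Cardinal.mk_le_mk_of_subset hTsub
        _ = Cardinal.lift.{1, 0} κ := by rw [Ordinal.mk_Iio_ordinal, Cardinal.card_ord]
    rcases eq_or_lt_of_le hle with heq | hlt
    · exact heq
    · exfalso
      have hlt' : Cardinal.mk T < Cardinal.lift.{1, 0} κ.ord.cof := by rwa [hκreg.cof_eq]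
      obtain ⟨b, hbκ, hble⟩ := bdd_of_card_lt_cof hκpos (fun x hx => hTsub hx) hlt'
      obtain ⟨γ, hγT, hγb⟩ := hTunb b hbκ
      exact absurd (hble γ hγT) (not_le.mpr hγb)
  -- uniformize the cardinality of members of A
  set g₁ : Set Ordinal → Ordinal := fun a =>
    if h : ∃ μ : Cardinal.{0}, Cardinal.lift.{1, 0} μ = Cardinal.mk a ∧ μ < χ
    then (Classical.choose h).ord else 0 with hg₁def
  have hA_ex : ∀ a ∈ A, ∃ μ : Cardinal.{0}, Cardinal.lift.{1, 0} μ = Cardinal.mk a ∧ μ < χ := by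
    intro a ha
    obtain ⟨μ, hμ⟩ := Cardinal.mem_range_lift_of_le (hAel a ha).2.le
    refine ⟨μ, hμ, ?_⟩
    rw [← Cardinal.lift_lt (a := μ), hμ]
    exact (hAel a ha).2
  have hg₁lt : ∀ a ∈ A, g₁ a < χ.ord := by
    intro a ha
    simp only [hg₁def, dif_pos (hA_ex a ha)]
    exact Cardinal.ord_lt_ord.mpr (Classical.choose_spec (hA_ex a ha)).2
  obtain ⟨j₀, hj₀, hA₁card⟩ := regular_pigeonhole hκreg hχ2 A hAcard g₁ hg₁lt
  set A₁ : Set (Set Ordinal) := {a | a ∈ A ∧ g₁ a = j₀} with hA₁def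
  set ν : Cardinal.{0} := j₀.card with hνdef
  have hν : ν < χ := Cardinal.lt_ord.mp hj₀
  have hA₁A : A₁ ⊆ A := fun a ha => ha.1
  have hA₁mk : ∀ a ∈ A₁, Cardinal.mk a = Cardinal.lift.{1, 0} ν := by
    rintro a ⟨haA, hag⟩
    have hg : g₁ a = (Classical.choose (hA_ex a haA)).ord := by
      simp only [hg₁def, dif_pos (hA_ex a haA)]
    have hcs := Classical.choose_spec (hA_ex a haA)
    have : ν = Classical.choose (hA_ex a haA) := by
      rw [hνdef, ← hag, hg, Cardinal.card_ord]
    rw [this, hcs.1]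
  -- the host relation
  set Host : Ordinal → Set Ordinal → Prop := fun γ a =>
    ∃ β ∈ a, (∀ x < γ, ∃ δ ∈ DleI c i β, x < δ ∧ δ < γ) ∧ ∀ δ ∈ DleI c i β, δ < γ
    with hHostdef
  have huniq : ∀ β γ γ', (∀ x < γ, ∃ δ ∈ DleI c i β, x < δ ∧ δ < γ) →
      (∀ δ ∈ DleI c i β, δ < γ) → (∀ x < γ', ∃ δ ∈ DleI c i β, x < δ ∧ δ < γ') →
      (∀ δ ∈ DleI c i β, δ < γ') → γ = γ' := by
    intro β γ γ' hc hb hc' hb'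
    rcases lt_trichotomy γ γ' with h | h | h
    · obtain ⟨δ, hδ, hγδ, _⟩ := hc' γ h
      exact absurd (hb δ hδ) (not_lt.mpr hγδ.le)
    · exact h
    · obtain ⟨δ, hδ, hγδ, _⟩ := hc γ' h
      exact absurd (hb' δ hδ) (not_lt.mpr hγδ.le)
  have hcap : ∀ a ∈ A₁, ∀ W : ↥(Set.Iio χ.ord) → Ordinal,
      (∀ j, W j ∈ T ∧ Host (W j) a) → Function.Injective W → False := by
    intro a ha W hW hinj
    have hex : ∀ j : ↥(Set.Iio χ.ord), ∃ β, β ∈ a ∧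
        (∀ x < W j, ∃ δ ∈ DleI c i β, x < δ ∧ δ < W j) ∧ ∀ δ ∈ DleI c i β, δ < W j := by
      intro j
      obtain ⟨β, hβ, h1, h2⟩ := (hW j).2
      exact ⟨β, hβ, h1, h2⟩
    choose Φ hΦmem hΦcof hΦbdd using hex
    have hΦinj : Function.Injective (fun j => (⟨Φ j, hΦmem j⟩ : ↥a)) := by
      intro j j' heq
      have hβeq : Φ j = Φ j' := congrArg Subtype.val heq
      refine hinj ?_
      refine huniq (Φ j) (W j) (W j') (hΦcof j) (hΦbdd j) ?_ ?_
      · rw [hβeq]; exact hΦcof j'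
      · rw [hβeq]; exact hΦbdd j'
    have hle : Cardinal.lift.{1, 0} χ ≤ Cardinal.mk ↥a := by
      calc Cardinal.lift.{1, 0} χ = Cardinal.mk ↥(Set.Iio χ.ord) := by
            rw [Ordinal.mk_Iio_ordinal, Cardinal.card_ord]
        _ ≤ Cardinal.mk ↥a := Cardinal.mk_le_of_injective hΦinj
    rw [hA₁mk a ha] at hle
    exact absurd (Cardinal.lift_le.mp hle) (not_le.mpr hν)
  obtain ⟨R, B, hRT, hRcard, hBA₁, hBcard, hfree⟩ :=
    free_pair hκreg hχ1 hχ2 hTcard hA₁card Host hcap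
  -- prerequisites for the chain construction
  have hRlt : R ⊆ Set.Iio κ.ord := fun x hx => hTsub (hRT hx)
  have hsucclt : ∀ b < κ.ord, b + 1 < κ.ord := by
    intro b hb
    rw [Ordinal.add_one_eq_succ]
    exact hlim.succ_lt hb
  have hRab : ∀ b < κ.ord, ∃ γ, γ ∈ R ∧ b < γ := by
    intro b hb
    by_contra hno
    push_neg at hno
    have hsub : R ⊆ Set.Iio (b + 1) := by
      intro x hx
      have := hno x hx
      rw [Set.mem_Iio, Ordinal.add_one_eq_succ, Order.lt_succ_iff]
      exact this
    have h1 : Cardinal.mk R ≤ Cardinal.lift.{1, 0} (b + 1).card :=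
      le_of_le_of_eq (Cardinal.mk_le_mk_of_subset hsub) (Ordinal.mk_Iio_ordinal _)
    rw [hRcard] at h1
    have h2 : (b + 1).card < κ := Cardinal.lt_ord.mp (hsucclt b hb)
    exact absurd (Cardinal.lift_le.mp h1) (not_le.mpr h2)
  have hBab : ∀ ξ, ξ < κ.ord → ∃ a, a ∈ B ∧ ∀ β ∈ a, ξ < β := by
    intro ξ hξ
    by_contra hno
    push_neg at hno
    have hex2 : ∀ ab : ↥B, ∃ β, β ∈ ab.1 ∧ β ≤ ξ := by
      intro ab
      obtain ⟨β, hβ1, hβ2⟩ := hno ab.1 ab.2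
      exact ⟨β, hβ1, hβ2⟩
    choose w hwmem hwle using hex2
    have hwinj : Function.Injective (fun ab : ↥B =>
        (⟨w ab, by rw [Set.mem_Iio, Ordinal.add_one_eq_succ, Order.lt_succ_iff]; exact hwle ab⟩
          : ↥(Set.Iio (ξ + 1)))) := by
      intro ab ab' heq
      have hweq : w ab = w ab' := congrArg Subtype.val heq
      by_contra hne
      have hvne : ab.1 ≠ ab'.1 := fun h => hne (Subtype.ext h)
      have hdisj := hADisj (hA₁A (hBA₁ ab.2)) (hA₁A (hBA₁ ab'.2)) hvne
      have := Set.disjoint_left.mp hdisj (hwmem ab)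
      rw [hweq] at this
      exact this (hwmem ab')
    have h1 : Cardinal.lift.{1, 0} κ ≤ Cardinal.lift.{1, 0} (ξ + 1).card := by
      calc Cardinal.lift.{1, 0} κ = Cardinal.mk ↥B := hBcard.symm
        _ ≤ Cardinal.mk ↥(Set.Iio (ξ + 1)) := Cardinal.mk_le_of_injective hwinj
        _ = _ := Ordinal.mk_Iio_ordinal _
    have h2 : (ξ + 1).card < κ := Cardinal.lt_ord.mp (hsucclt ξ hξ)
    exact absurd (Cardinal.lift_le.mp h1) (not_le.mpr h2)
  have hν1 : ν + 1 < χ :=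
    Cardinal.add_lt_of_lt hχ1 hν (Cardinal.one_lt_aleph0.trans_le hχ1)
  have hBbdd : ∀ γ, ∀ a ∈ B, γ < κ.ord → ∃ ζ, ζ < κ.ord ∧ ∀ x ∈ insert γ a, x < ζ := by
    intro γ a haB hγ
    have hins : ∀ x ∈ insert γ a, x < κ.ord := by
      intro x hx
      rcases Set.mem_insert_iff.mp hx with rfl | hx2
      · exact hγ
      · exact (hAel a (hA₁A (hBA₁ haB))).1 hx2
    have hcard : Cardinal.mk ↥(insert γ a : Set Ordinal) < Cardinal.lift.{1, 0} κ.ord.cof := by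
      rw [hκreg.cof_eq]
      calc Cardinal.mk ↥(insert γ a : Set Ordinal) ≤ Cardinal.mk ↥a + 1 := Cardinal.mk_insert_le
        _ = Cardinal.lift.{1, 0} ν + Cardinal.lift.{1, 0} 1 := by
            rw [hA₁mk a (hBA₁ haB), Cardinal.lift_one]
        _ = Cardinal.lift.{1, 0} (ν + 1) := (Cardinal.lift_add _ _).symm
        _ < Cardinal.lift.{1, 0} κ := Cardinal.lift_lt.mpr (hν1.trans hχ2)
    obtain ⟨b, hbκ, hble⟩ := bdd_of_card_lt_cof hκpos hins hcard
    refine ⟨b + 1, hsucclt b hbκ, fun x hx => ?_⟩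
    calc x ≤ b := hble x hx
      _ < b + 1 := by rw [Ordinal.add_one_eq_succ]; exact Order.lt_succ b
  obtain ⟨G, hG1, hG2⟩ := exists_chain hκreg hRab hRlt hBab hBbdd
  -- the family of blocks
  set Z : ↥(Set.Iio κ.ord) → Set Ordinal := fun lh => insert (G lh.1).1 (G lh.1).2 with hZdef
  have hmemIio : ∀ lh : ↥(Set.Iio κ.ord), lh.1 < κ.ord := fun lh => lh.2
  have hZsetlt : ∀ lh mh : ↥(Set.Iio κ.ord), lh.1 < mh.1 → SetLT (Z lh) (Z mh) := by
    intro lh mh hlt x hx y hy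
    exact hG2 lh.1 mh.1 hlt (hmemIio mh) x hx y hy
  have hZR : ∀ lh : ↥(Set.Iio κ.ord), (G lh.1).1 ∈ R := fun lh => (hG1 lh.1 (hmemIio lh)).1
  have hZB : ∀ lh : ↥(Set.Iio κ.ord), (G lh.1).2 ∈ B := fun lh => (hG1 lh.1 (hmemIio lh)).2.1
  have hZgb : ∀ lh : ↥(Set.Iio κ.ord), ∀ β ∈ (G lh.1).2, (G lh.1).1 < β :=
    fun lh => (hG1 lh.1 (hmemIio lh)).2.2
  have hZmem : ∀ lh : ↥(Set.Iio κ.ord), (G lh.1).1 ∈ Z lh :=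
    fun lh => Set.mem_insert _ _
  have hZinj : Function.Injective Z := by
    intro lh mh heq
    by_contra hne
    have hvne : lh.1 ≠ mh.1 := fun h => hne (Subtype.ext h)
    rcases hvne.lt_or_gt with h | h
    · have := hZsetlt lh mh h (G mh.1).1 (by rw [heq]; exact hZmem mh) (G mh.1).1 (hZmem mh)
      exact lt_irrefl _ this
    · have := hZsetlt mh lh h (G lh.1).1 (by rw [← heq]; exact hZmem lh) (G lh.1).1 (hZmem lh)
      exact lt_irrefl _ this
  set 𝒵 : Set (Set Ordinal) := Set.range Z with h𝒵def
  have hfam : IsDisjFamily κ (ν + 1) 𝒵 := by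
    refine ⟨?_, ?_, ?_⟩
    · rintro z ⟨lh, rfl⟩
      constructor
      · intro x hx
        rcases Set.mem_insert_iff.mp hx with rfl | hx2
        · exact hRlt (hZR lh)
        · exact (hAel _ (hA₁A (hBA₁ (hZB lh)))).1 hx2
      · have hnotmem : (G lh.1).1 ∉ (G lh.1).2 := by
          intro hmem
          exact lt_irrefl _ (hZgb lh _ hmem)
        show Cardinal.mk ↥(Z lh) = _
        rw [hZdef]
        simp only []
        rw [Cardinal.mk_insert hnotmem, hA₁mk _ (hBA₁ (hZB lh)),
          Cardinal.lift_add, Cardinal.lift_one]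
    · rintro z ⟨lh, rfl⟩ z' ⟨mh, rfl⟩ hne
      have hvne : lh ≠ mh := fun h => hne (congrArg Z h)
      have hvne' : lh.1 ≠ mh.1 := fun h => hvne (Subtype.ext h)
      have key : ∀ p q : ↥(Set.Iio κ.ord), p.1 < q.1 → Disjoint (id (Z p)) (id (Z q)) := by
        intro p q hpq
        simp only [id]
        rw [Set.disjoint_left]
        intro w hwp hwq
        exact lt_irrefl _ (hZsetlt p q hpq w hwp w hwq)
      rcases hvne'.lt_or_gt with h | h
      · exact key lh mh h
      · exact (key mh lh h).symm
    · show Cardinal.mk ↥𝒵 = _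
      rw [h𝒵def, Cardinal.mk_range_eq Z hZinj, Ordinal.mk_Iio_ordinal, Cardinal.card_ord]
  obtain ⟨B₂, hB₂Z, hB₂card, hP⟩ := hwit.2 (ν + 1) hν1 𝒵 hfam i hi
  have h2le : (2 : Cardinal.{1}) ≤ Cardinal.mk ↥B₂ := by
    rw [hB₂card]
    rw [Cardinal.lift_two]
  obtain ⟨x, y, hxy⟩ := Cardinal.two_le_iff.mp h2le
  obtain ⟨lh, hlx⟩ := hB₂Z x.2
  obtain ⟨mh, hmy⟩ := hB₂Z y.2
  have key : ∀ ph qh : ↥(Set.Iio κ.ord), ph.1 < qh.1 → Z ph ∈ B₂ → Z qh ∈ B₂ → False := by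
    intro ph qh hpq hpB hqB
    have hsetlt : SetLT (Z ph) (Z qh) := hZsetlt ph qh hpq
    have hcolors : ∀ α ∈ Z ph, ∀ β ∈ Z qh, i < c α β := hP (Z ph) hpB (Z qh) hqB hsetlt
    set γL : Ordinal := (G ph.1).1 with hγLdef
    set aM : Set Ordinal := (G qh.1).2 with haMdef
    have hγR : γL ∈ R := hZR ph
    have hγT : γL ∈ T := hRT hγR
    have hγSig : γL ∈ Sig := hγT.1
    have hγD : γL ∈ D := hγT.2
    have haB : aM ∈ B := hZB qh
    have haA : aM ∈ A := hA₁A (hBA₁ haB)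
    have hγa : ∀ β ∈ aM, γL < β := fun β hβ =>
      hsetlt γL (hZmem ph) β (Set.mem_insert_of_mem _ hβ)
    have hcof : χ ≤ γL.cof := (hSig hγSig).2
    have hγpos : 0 < γL := by
      rcases eq_zero_or_pos γL with h0 | hpos
      · exfalso
        rw [h0, Ordinal.cof_zero] at hcof
        exact absurd (hχ1.trans hcof) (not_le.mpr Cardinal.aleph0_pos)
      · exact hpos
    by_cases hcofinal : ∃ β ∈ aM, ∀ x < γL, ∃ δ ∈ DleI c i β, x < δ ∧ δ < γL
    · obtain ⟨β', hβ'a, hβ'cof⟩ := hcofinal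
      by_cases hup : ∃ δ ∈ DleI c i β', γL ≤ δ
      · have hβ'κ : β' < κ.ord := (hAel aM haA).1 hβ'a
        have hmem : γL ∈ DleI c i β' :=
          hclosed β' hβ'κ i hi.le γL hγSig hγpos hβ'cof hup
        have hcol : i < c γL β' :=
          hcolors γL (hZmem ph) β' (Set.mem_insert_of_mem _ hβ'a)
        exact absurd hmem.2 (not_le.mpr hcol)
      · push_neg at hup
        refine hfree γL hγR aM haB ⟨β', hβ'a, hβ'cof, fun δ hδ => hup δ hδ⟩
    · push_neg at hcofinal
      have hxf : ∀ b : ↥aM, ∃ x, x < γL ∧ ∀ δ ∈ DleI c i b.1, x < δ → γL ≤ δ := by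
        intro b
        obtain ⟨x, hx1, hx2⟩ := hcofinal b.1 b.2
        exact ⟨x, hx1, hx2⟩
      choose xf hxlt hxprop using hxf
      have hbdd : ∃ bnd, bnd < γL ∧ ∀ v ∈ Set.range xf, v ≤ bnd := by
        refine bdd_of_card_lt_cof hγpos ?_ ?_
        · rintro v ⟨b, rfl⟩
          exact hxlt b
        · calc Cardinal.mk ↥(Set.range xf) ≤ Cardinal.mk ↥aM := Cardinal.mk_range_le
            _ = Cardinal.lift.{1, 0} ν := hA₁mk aM (hBA₁ haB)
            _ < Cardinal.lift.{1, 0} χ := Cardinal.lift_lt.mpr hν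
            _ ≤ Cardinal.lift.{1, 0} γL.cof := Cardinal.lift_le.mpr hcof
      obtain ⟨bnd, hbndγ, hbndub⟩ := hbdd
      obtain ⟨α, hα1, hα2, β, hβa, hcle⟩ := hcon γL hγD aM haA bnd hbndγ hγa
      have hαD : α ∈ DleI c i β := ⟨hα2.trans (hγa β hβa), hcle⟩
      have h1 : ¬ xf ⟨β, hβa⟩ < α := by
        intro hlt
        exact absurd (hxprop ⟨β, hβa⟩ α hαD hlt) (not_le.mpr hα2)
      have h2 : xf ⟨β, hβa⟩ ≤ bnd := hbndub _ ⟨⟨β, hβa⟩, rfl⟩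
      have h3 : α ≤ bnd := (not_lt.mp h1).trans h2
      exact absurd hα1 (not_lt.mpr h3)
  have hxyv : (x : Set Ordinal) ≠ (y : Set Ordinal) := fun h => hxy (Subtype.ext h)
  have hlhmh : lh.1 ≠ mh.1 := by
    intro h
    apply hxyv
    rw [← hlx, ← hmy]
    exact congrArg Z (Subtype.ext h)
  have hZlB : Z lh ∈ B₂ := by rw [hlx]; exact x.2
  have hZmB : Z mh ∈ B₂ := by rw [hmy]; exact y.2
  rcases hlhmh.lt_or_gt with h | h
  · exact key lh mh h hZlB hZmB
  · exact key mh lh h hZmB hZlB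
end
end

section
/- Fix a C-sequence ⟨C_α : α < κ⟩ and the derived walk functions. If λ₂(γ, β) < α < γ < β < κ, then tr(γ, β) is an initial segment of tr(α, β), and moreover either γ ∈ im(tr(α, β)), or γ ∈ acc(C_δ) where δ = min(im(tr(γ, β))). -/
open Cardinal Set Ordinal

noncomputable section

/-- `D` is a club in (the ordinal) `o`: a closed and unbounded subset of `o`. -/
def IsClubIn (D : Set Ordinal) (o : Ordinal) : Prop :=
  D ⊆ Set.Iio o ∧ (∀ α < o, ∃ β ∈ D, α ≤ β) ∧
    ∀ γ < o, 0 < γ → (∀ x < γ, ∃ β ∈ D, x < β ∧ β < γ) → γ ∈ D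

/-- `S` is stationary in `o`: it meets every club in `o`. -/
def IsStationaryIn (S : Set Ordinal) (o : Ordinal) : Prop :=
  ∀ D, IsClubIn D o → (S ∩ D).Nonempty

/-- A `C`-sequence over `κ`. -/
def IsCSeq (κ : Cardinal) (C : Ordinal → Set Ordinal) : Prop :=
  C 0 = ∅ ∧ (∀ α, C (α + 1) = {α}) ∧
    ∀ α < κ.ord, Order.IsSuccLimit α → IsClubIn (C α) α

/-- The walk `Tr(α,β)` from `β` down to `α` along the `C`-sequence `C`. -/
def walk (C : Ordinal → Set Ordinal) (α β : Ordinal) : ℕ → Ordinal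
  | 0 => β
  | n + 1 =>
      if α < walk C α β n then sInf {γ ∈ C (walk C α β n) | α ≤ γ} else α

/-- `ρ₂(α,β)`: the number of steps of the walk from `β` down to `α`. -/
def rho2 (C : Ordinal → Set Ordinal) (α β : Ordinal) : ℕ :=
  sInf {n : ℕ | walk C α β n = α}

/-- `λ₂(α,β) = sup (α ∩ {sup (C_δ ∩ α) : δ ∈ im (tr (α,β))})`. -/
def lambda2 (C : Ordinal → Set Ordinal) (α β : Ordinal) : Ordinal :=
  sSup {x : Ordinal | x < α ∧
    ∃ n < rho2 C α β, x = sSup (C (walk C α β n) ∩ Set.Iio α)}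

/-- The set of accumulation points of `s` that belong to `s`. -/
def accSet (s : Set Ordinal) : Set Ordinal :=
  {δ ∈ s | 0 < δ ∧ ∀ x < δ, ∃ y ∈ s, x < y ∧ y < δ}

/-- `c` is a closed coloring: for all `β < κ` and `i ≤ θ`, the set
`{α < β : c α β ≤ i}` contains all of its accumulation points below `β`. -/
def ClosedColoring (κ θ : Cardinal) (c : Ordinal → Ordinal → Ordinal) : Prop :=
  ∀ β < κ.ord, ∀ i ≤ θ.ord, ∀ γ < β, 0 < γ →
    (∀ x < γ, ∃ α, x < α ∧ α < γ ∧ c α β ≤ i) → c γ β ≤ i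


section WalkAux

variable {κ : Cardinal} {C : Ordinal → Set Ordinal}

lemma cseq_subset (hC : IsCSeq κ C) {δ : Ordinal} (hδ : δ < κ.ord) :
    C δ ⊆ Set.Iio δ := by
  rcases Ordinal.zero_or_succ_or_isSuccLimit δ with h | ⟨a, h⟩ | h
  · subst h; rw [hC.1]; exact fun x hx => hx.elim
  · subst h
    rw [← Ordinal.add_one_eq_succ, hC.2.1 a]
    intro x hx
    rw [Set.mem_singleton_iff] at hx
    subst hx
    exact Ordinal.add_one_eq_succ x ▸ Order.lt_succ x
  · exact (hC.2.2 δ hδ h).1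

lemma cseq_nonempty (hC : IsCSeq κ C) {a δ : Ordinal} (hδ : δ < κ.ord) (h : a < δ) :
    {x ∈ C δ | a ≤ x}.Nonempty := by
  rcases Ordinal.zero_or_succ_or_isSuccLimit δ with h0 | ⟨b, hb⟩ | hl
  · exact absurd (h0 ▸ h) (not_lt_zero (a := a))
  · subst hb
    refine ⟨b, ?_, ?_⟩
    · rw [← Ordinal.add_one_eq_succ, hC.2.1 b]; rfl
    · exact Order.lt_succ_iff.mp h
  · obtain ⟨x, hx, hax⟩ := (hC.2.2 δ hδ hl).2.1 a h
    exact ⟨x, hx, hax⟩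

lemma walk_bounds (hC : IsCSeq κ C) {a β : Ordinal} (hβ : β < κ.ord) (hab : a ≤ β) :
    ∀ n, a ≤ walk C a β n ∧ walk C a β n ≤ β := by
  intro n
  induction n with
  | zero => exact ⟨hab, le_rfl⟩
  | succ n ih =>
    rw [walk]
    by_cases h : a < walk C a β n
    · rw [if_pos h]
      have hκ : walk C a β n < κ.ord := lt_of_le_of_lt ih.2 hβ
      have hmem := csInf_mem (cseq_nonempty hC hκ h)
      exact ⟨hmem.2, le_trans (le_of_lt (cseq_subset hC hκ hmem.1)) ih.2⟩
    · rw [if_neg h]; exact ⟨le_rfl, hab⟩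

lemma walk_step_lt (hC : IsCSeq κ C) {a β : Ordinal} (hβ : β < κ.ord) (hab : a ≤ β)
    {n : ℕ} (h : a < walk C a β n) : walk C a β (n + 1) < walk C a β n := by
  have hκ : walk C a β n < κ.ord := lt_of_le_of_lt (walk_bounds hC hβ hab n).2 hβ
  rw [walk, if_pos h]
  exact cseq_subset hC hκ (csInf_mem (cseq_nonempty hC hκ h)).1

lemma walk_reaches (hC : IsCSeq κ C) {a β : Ordinal} (hβ : β < κ.ord) (hab : a ≤ β) :
    ∃ n, walk C a β n = a := by
  by_contra hcon
  push_neg at hcon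
  have hlt : ∀ n, a < walk C a β n := fun n =>
    lt_of_le_of_ne (walk_bounds hC hβ hab n).1 (Ne.symm (hcon n))
  have hdec : ∀ n, walk C a β (n + 1) < walk C a β n := fun n =>
    walk_step_lt hC hβ hab (hlt n)
  obtain ⟨n, hn⟩ := Ordinal.lt_wf.min_mem (Set.range (walk C a β)) ⟨β, 0, rfl⟩
  exact Ordinal.lt_wf.not_lt_min (Set.range (walk C a β))
    ⟨n + 1, rfl⟩ (hn ▸ hdec n)

lemma rho2_spec (hC : IsCSeq κ C) {a β : Ordinal} (hβ : β < κ.ord) (hab : a ≤ β) :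
    walk C a β (rho2 C a β) = a ∧ ∀ n < rho2 C a β, a < walk C a β n := by
  have hne : {n : ℕ | walk C a β n = a}.Nonempty := walk_reaches hC hβ hab
  constructor
  · exact Nat.sInf_mem hne
  · intro n hn
    refine lt_of_le_of_ne (walk_bounds hC hβ hab n).1 fun h => ?_
    exact absurd (Nat.sInf_le (h.symm : walk C a β n = a)) (not_le.mpr hn)

end WalkAux

theorem stmt11 (κ : Cardinal) (C : Ordinal → Set Ordinal)
    (hκreg : κ.IsRegular) (hκunc : ℵ₀ < κ) (hC : IsCSeq κ C)
    (α γ β : Ordinal) (h1 : α < γ) (h2 : γ < β) (h3 : β < κ.ord)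
    (h4 : lambda2 C γ β < α) :
    (rho2 C γ β ≤ rho2 C α β ∧
      ∀ n < rho2 C γ β, walk C α β n = walk C γ β n) ∧
    ((∃ n < rho2 C α β, walk C α β n = γ) ∨
      ∃ n : ℕ, n + 1 = rho2 C γ β ∧ γ ∈ accSet (C (walk C γ β n))) := by
  have hα0 : (0 : Ordinal) < α := lt_of_le_of_lt zero_le h4
  have hγ0 : (0 : Ordinal) < γ := lt_trans hα0 h1
  have hγβ : γ ≤ β := h2.le
  have hαβ : α ≤ β := (h1.trans h2).le
  obtain ⟨hwm, hlt⟩ := rho2_spec hC h3 hγβ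
  have hm0 : 0 < rho2 C γ β := by
    rcases Nat.eq_zero_or_pos (rho2 C γ β) with h | h
    · exfalso
      rw [h] at hwm
      exact absurd (hwm : β = γ) (ne_of_gt h2)
    · exact h
  have hsup_lt : ∀ n < rho2 C γ β, sSup (C (walk C γ β n) ∩ Set.Iio γ) < γ →
      sSup (C (walk C γ β n) ∩ Set.Iio γ) < α := by
    intro n hn hlt'
    refine lt_of_le_of_lt ?_ h4
    exact le_csSup ⟨γ, fun x hx => hx.1.le⟩ ⟨hlt', n, hn, rfl⟩
  have keyA : ∀ n < rho2 C γ β, sSup (C (walk C γ β n) ∩ Set.Iio γ) < γ →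
      {x ∈ C (walk C γ β n) | α ≤ x} = {x ∈ C (walk C γ β n) | γ ≤ x} := by
    intro n hn hs
    ext x
    constructor
    · rintro ⟨hx, hax⟩
      refine ⟨hx, ?_⟩
      by_contra hxγ
      push_neg at hxγ
      have hxs : x ≤ sSup (C (walk C γ β n) ∩ Set.Iio γ) :=
        le_csSup ⟨γ, fun y hy => hy.2.le⟩ ⟨hx, hxγ⟩
      exact absurd hax (not_le.mpr (lt_of_le_of_lt hxs (hsup_lt n hn hs)))
    · rintro ⟨hx, hgx⟩
      exact ⟨hx, le_trans h1.le hgx⟩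
  have caseB : ∀ n < rho2 C γ β, sSup (C (walk C γ β n) ∩ Set.Iio γ) = γ →
      γ ∈ accSet (C (walk C γ β n)) ∧ walk C γ β (n + 1) = γ := by
    intro n hn hs
    have hδκ : walk C γ β n < κ.ord := lt_of_le_of_lt (walk_bounds hC h3 hγβ n).2 h3
    have hγδ : γ < walk C γ β n := hlt n hn
    have hne : (C (walk C γ β n) ∩ Set.Iio γ).Nonempty := by
      by_contra hcon
      rw [Set.not_nonempty_iff_eq_empty] at hcon
      rw [hcon, csSup_empty] at hs
      exact absurd hs.symm (ne_of_gt hγ0)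
    have hacc : ∀ x < γ, ∃ y ∈ C (walk C γ β n), x < y ∧ y < γ := by
      intro x hx
      obtain ⟨y, hy, hxy⟩ := exists_lt_of_lt_csSup hne (hs ▸ hx)
      exact ⟨y, hy.1, hxy, hy.2⟩
    have hlim : Order.IsSuccLimit (walk C γ β n) := by
      rcases Ordinal.zero_or_succ_or_isSuccLimit (walk C γ β n) with h0 | ⟨b, hb⟩ | hl
      · exact absurd (h0 ▸ hγδ) (not_lt_zero (a := γ))
      · exfalso
        have hCb : C (walk C γ β n) = {b} := by
          rw [← hb, ← Ordinal.add_one_eq_succ, hC.2.1]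
        obtain ⟨y, hy, _, hyγ⟩ := hacc 0 hγ0
        rw [hCb, Set.mem_singleton_iff] at hy
        subst hy
        obtain ⟨z, hz, hyz, _⟩ := hacc y hyγ
        rw [hCb, Set.mem_singleton_iff] at hz
        subst hz
        exact lt_irrefl _ hyz
      · exact hl
    have hclub := hC.2.2 _ hδκ hlim
    have hγmem : γ ∈ C (walk C γ β n) := hclub.2.2 γ hγδ hγ0 hacc
    refine ⟨⟨hγmem, hγ0, hacc⟩, ?_⟩
    rw [walk, if_pos hγδ]
    apply le_antisymm
    · exact csInf_le' ⟨hγmem, le_rfl⟩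
    · exact le_csInf (cseq_nonempty hC hδκ hγδ) fun x hx => hx.2
  have Q : ∀ n < rho2 C γ β, walk C α β n = walk C γ β n := by
    intro n
    induction n with
    | zero => intro _; rfl
    | succ n ih =>
      intro hn1
      have hn : n < rho2 C γ β := Nat.lt_of_succ_lt hn1
      have he := ih hn
      have hγδ : γ < walk C γ β n := hlt n hn
      have hαδ : α < walk C α β n := he ▸ lt_trans h1 hγδ
      have hsle : sSup (C (walk C γ β n) ∩ Set.Iio γ) ≤ γ := csSup_le' fun x hx => hx.2.le
      have hslt : sSup (C (walk C γ β n) ∩ Set.Iio γ) < γ := by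
        rcases lt_or_eq_of_le hsle with h | h
        · exact h
        · exfalso
          have hw := (caseB n hn h).2
          exact absurd (Nat.sInf_le (hw : walk C γ β (n + 1) = γ)) (not_le.mpr hn1)
      rw [walk, walk, if_pos hαδ, if_pos hγδ, he]
      exact congrArg sInf (keyA n hn hslt)
  obtain ⟨k, hk⟩ : ∃ k, k + 1 = rho2 C γ β := ⟨rho2 C γ β - 1, Nat.succ_pred_eq_of_pos hm0⟩
  have part1 : rho2 C γ β ≤ rho2 C α β := by
    by_contra hcon
    push_neg at hcon
    have hlt2 : α < walk C α β (rho2 C α β) :=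
      (Q (rho2 C α β) hcon) ▸ lt_trans h1 (hlt (rho2 C α β) hcon)
    rw [(rho2_spec hC h3 hαβ).1] at hlt2
    exact lt_irrefl _ hlt2
  refine ⟨⟨part1, Q⟩, ?_⟩
  have hkm : k < rho2 C γ β := hk ▸ Nat.lt_succ_self k
  have hsle : sSup (C (walk C γ β k) ∩ Set.Iio γ) ≤ γ := csSup_le' fun x hx => hx.2.le
  rcases lt_or_eq_of_le hsle with hs | hs
  · left
    have hγδ : γ < walk C γ β k := hlt k hkm
    have hαδ : α < walk C α β k := (Q k hkm) ▸ lt_trans h1 hγδ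
    have hwγ : walk C γ β (k + 1) = γ := by rw [hk]; exact hwm
    rw [walk, if_pos hγδ] at hwγ
    have hwα : walk C α β (k + 1) = γ := by
      rw [walk, if_pos hαδ, Q k hkm, keyA k hkm hs]
      exact hwγ
    have hle : k + 1 ≤ rho2 C α β := hk ▸ part1
    refine ⟨k + 1, lt_of_le_of_ne hle fun hEq => ?_, hwα⟩
    have hend := (rho2_spec hC h3 hαβ).1
    rw [← hEq, hwα] at hend
    exact absurd hend (ne_of_gt h1)
  · right
    obtain ⟨hacc, -⟩ := caseB k hkm hs
    exact ⟨k, hk, hacc⟩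
end
end

section
/- Suppose θ ≤ λ are infinite regular cardinals. Then U(λ⁺, λ⁺, θ, λ) holds; that is, there is a coloring c : [λ⁺]² → θ such that for every χ' < λ, every family A ⊆ [λ⁺]^{χ'} of λ⁺-many pairwise disjoint sets, and every i < θ, there exists B ∈ [A]^{λ⁺} with min(c[a × b]) > i for all pairs a < b from B. -/
open Cardinal Set Ordinal

noncomputable section

namespace P16
variable (lam : Cardinal.{0})

def κo : Ordinal.{0} := (Order.succ lam).ord

lemma cof_κo (h : ℵ₀ ≤ lam) : (κo lam).cof = Order.succ lam := (isRegular_succ h).cof_eq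

lemma κo_limit (h : ℵ₀ ≤ lam) : Order.IsSuccLimit (κo lam) :=
  Cardinal.isSuccLimit_ord (h.trans (le_of_lt (Order.lt_succ _)))

lemma card_le_of_lt_κo {x : Ordinal} (hx : x < κo lam) : x.card ≤ lam :=
  Order.lt_succ_iff.mp (Cardinal.lt_ord.mp hx)

/-- Existence of a suitable `C`-sequence member at `x`. -/
lemma cex (hl : ℵ₀ ≤ lam) : ∀ x : Ordinal, 0 < x → x < κo lam →
    ∃ C : Set Ordinal, C ⊆ Iio x ∧ (∀ α < x, ∃ y ∈ C, α ≤ y) ∧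
      (∀ δ : Ordinal, δ.cof = lam → δ < x → ∃ γ < δ, ∀ y ∈ C, y < δ → y ≤ γ) := by
  intro x hx0 hxκ
  have hδ0 : ∀ δ : Ordinal, δ.cof = lam → 0 < δ := by
    intro δ hδ
    rcases eq_zero_or_pos δ with h | h
    · rw [h, cof_zero] at hδ
      exact absurd hδ.symm (aleph0_pos.trans_le hl).ne'
    · exact h
  rcases Ordinal.zero_or_succ_or_isSuccLimit x with rfl | ⟨u, rfl⟩ | hlim
  · exact absurd hx0 (lt_irrefl 0)
  · refine ⟨{u}, ?_, ?_, ?_⟩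
    · intro y hy; rw [mem_singleton_iff] at hy; subst hy; exact Order.lt_succ y
    · intro α hα; exact ⟨u, rfl, Order.lt_succ_iff.mp hα⟩
    · intro δ hδcof hδx
      refine ⟨0, hδ0 δ hδcof, ?_⟩
      intro y hy hyδ; rw [mem_singleton_iff] at hy; subst hy
      exact absurd (hyδ.trans_le (Order.lt_succ_iff.mp hδx)) (lt_irrefl y)
  · obtain ⟨f, hf⟩ := exists_fundamental_sequence x
    have hνlam : x.cof.ord ≤ lam.ord :=
      Cardinal.ord_le_ord.mpr ((cof_le_card x).trans (card_le_of_lt_κo lam hxκ))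
    refine ⟨(fun i => if h : i < x.cof.ord then f i h + 1 else 0) '' (Iio x.cof.ord), ?_, ?_, ?_⟩
    · rintro y ⟨i, hi, rfl⟩
      rw [mem_Iio] at hi
      show (if h : i < x.cof.ord then f i h + 1 else 0) ∈ Iio x
      rw [mem_Iio, dif_pos hi, Ordinal.add_one_eq_succ]
      apply hlim.succ_lt
      have := Ordinal.lt_blsub (fun i h => f i h) i hi
      rwa [hf.blsub_eq] at this
    · intro α hα
      have : α < Ordinal.blsub x.cof.ord (fun i h => f i h) := by rw [hf.blsub_eq]; exact hα
      obtain ⟨i, hi, hle⟩ := Ordinal.lt_blsub_iff.mp this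
      refine ⟨_, ⟨i, mem_Iio.mpr hi, rfl⟩, ?_⟩
      show α ≤ (if h : i < x.cof.ord then f i h + 1 else 0)
      rw [dif_pos hi]
      exact hle.trans (le_of_lt (lt_add_one _))
    · intro δ hδcof hδx
      have hδlim : Order.IsSuccLimit δ := aleph0_le_cof.mp (hδcof ▸ hl)
      by_cases hall : ∀ i (hi : i < x.cof.ord), f i hi < δ
      · exfalso
        have : Ordinal.blsub x.cof.ord (fun i h => f i h) ≤ δ := Ordinal.blsub_le_iff.mpr hall
        rw [hf.blsub_eq] at this
        exact absurd (this.trans_lt hδx) (lt_irrefl x)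
      · push_neg at hall
        obtain ⟨i₁, hi₁, hge⟩ := hall
        have hIne : {i | ∃ hi : i < x.cof.ord, δ ≤ f i hi}.Nonempty := ⟨i₁, hi₁, hge⟩
        obtain ⟨hi₀ν, hi₀ge⟩ : ∃ hi : sInf {i | ∃ hi : i < x.cof.ord, δ ≤ f i hi} < x.cof.ord,
            δ ≤ f _ hi := csInf_mem hIne
        refine ⟨Ordinal.bsup _ (fun j (_ : j < sInf {i | ∃ hi : i < x.cof.ord, δ ≤ f i hi}) =>
          if h : j < x.cof.ord then f j h + 1 else 0), ?_, ?_⟩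
        · apply Ordinal.bsup_lt_ord
          · rw [hδcof]
            exact Cardinal.lt_ord.mp (lt_of_lt_of_le hi₀ν hνlam)
          · intro j hj
            have hjν : j < x.cof.ord := hj.trans hi₀ν
            have hjI : j ∉ {i | ∃ hi : i < x.cof.ord, δ ≤ f i hi} :=
              fun hm => (not_lt.mpr (csInf_le' hm)) hj
            have hfj : f j hjν < δ := by
              by_contra hc
              exact hjI ⟨hjν, not_lt.mp hc⟩
            rw [dif_pos hjν, Ordinal.add_one_eq_succ]
            exact hδlim.succ_lt hfj
        · rintro y ⟨i, hi, rfl⟩ hyδ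
          rw [mem_Iio] at hi
          have hii₀ : i < sInf {i | ∃ hi : i < x.cof.ord, δ ≤ f i hi} := by
            by_contra hc
            push_neg at hc
            have h2 : f _ hi₀ν ≤ f i hi := by
              rcases eq_or_lt_of_le hc with heq | hlt
              · subst heq; exact le_refl _
              · exact le_of_lt (hf.strict_mono _ _ hlt)
            replace hyδ : (if h : i < x.cof.ord then f i h + 1 else 0) < δ := hyδ
            rw [dif_pos hi] at hyδ
            exact absurd (((hi₀ge.trans h2).trans (le_of_lt (lt_add_one _))).trans_lt hyδ)
              (lt_irrefl δ)
          exact Ordinal.le_bsup _ i hii₀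

/-- The chosen C-sequence. -/
def Cs (x : Ordinal) : Set Ordinal :=
  if h : ℵ₀ ≤ lam ∧ 0 < x ∧ x < κo lam then (cex lam h.1 x h.2.1 h.2.2).choose else ∅

variable {lam}
variable (hl : ℵ₀ ≤ lam)
include hl

lemma Cs_sub {x : Ordinal} (h0 : 0 < x) (hx : x < κo lam) : Cs lam x ⊆ Iio x := by
  rw [Cs, dif_pos (⟨hl, h0, hx⟩ : ℵ₀ ≤ lam ∧ 0 < x ∧ x < κo lam)]
  exact (cex lam hl x h0 hx).choose_spec.1

lemma Cs_cof {x : Ordinal} (h0 : 0 < x) (hx : x < κo lam) : ∀ α < x, ∃ y ∈ Cs lam x, α ≤ y := by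
  rw [Cs, dif_pos (⟨hl, h0, hx⟩ : ℵ₀ ≤ lam ∧ 0 < x ∧ x < κo lam)]
  exact (cex lam hl x h0 hx).choose_spec.2.1

lemma Cs_bdd {x : Ordinal} (h0 : 0 < x) (hx : x < κo lam) :
    ∀ δ : Ordinal, δ.cof = lam → δ < x → ∃ γ < δ, ∀ y ∈ Cs lam x, y < δ → y ≤ γ := by
  rw [Cs, dif_pos (⟨hl, h0, hx⟩ : ℵ₀ ≤ lam ∧ 0 < x ∧ x < κo lam)]
  exact (cex lam hl x h0 hx).choose_spec.2.2

variable (lam)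

omit hl in
/-- The next step of the walk from `x` down towards `α`. -/
def stp (α x : Ordinal) : Ordinal := sInf (Cs lam x ∩ Ici α)

variable {lam}

lemma stp_mem {α x : Ordinal} (hax : α < x) (hx : x < κo lam) :
    stp lam α x ∈ Cs lam x ∩ Ici α := by
  apply csInf_mem
  obtain ⟨y, hy, hay⟩ := Cs_cof hl ((zero_le (a := α)).trans_lt hax) hx α hax
  exact ⟨y, hy, hay⟩

omit hl in
lemma stp_lt {α x : Ordinal} (hax : α < x) : stp lam α x < x := by
  have h0x : 0 < x := (zero_le (a := α)).trans_lt hax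
  by_cases hgood : ℵ₀ ≤ lam ∧ 0 < x ∧ x < κo lam
  · exact (Cs_sub hgood.1 h0x hgood.2.2) (stp_mem hgood.1 hax hgood.2.2).1
  · rw [stp, Cs, dif_neg hgood]
    simp only [Set.empty_inter]
    rw [Ordinal.sInf_empty]
    exact h0x

variable (lam)

omit hl in
/-- The (finite) set of ordinals visited by the walk from `x` down towards `α`,
all of which are `> α`. -/
def wlk (α x : Ordinal) : Set Ordinal :=
  if h : x ≤ α then ∅ else insert x (wlk α (stp lam α x))
termination_by x
decreasing_by exact stp_lt (not_le.mp h)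

variable {lam}

omit hl in
lemma wlk_of_le {α x : Ordinal} (h : x ≤ α) : wlk lam α x = ∅ := by
  rw [wlk, dif_pos h]

omit hl in
lemma wlk_of_lt {α x : Ordinal} (h : α < x) :
    wlk lam α x = insert x (wlk lam α (stp lam α x)) := by
  rw [wlk, dif_neg (not_le.mpr h)]

omit hl in
lemma self_mem_wlk {α x : Ordinal} (h : α < x) : x ∈ wlk lam α x := by
  rw [wlk_of_lt h]; exact mem_insert _ _

omit hl in
lemma wlk_mem_spec {α x : Ordinal} : ∀ y ∈ wlk lam α x, α < y ∧ y ≤ x := by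
  induction x using Ordinal.induction with
  | _ x IH =>
    intro y hy
    by_cases h : x ≤ α
    · rw [wlk_of_le h] at hy; exact absurd hy (notMem_empty y)
    · push_neg at h
      rw [wlk_of_lt h] at hy
      rcases mem_insert_iff.mp hy with rfl | hy'
      · exact ⟨h, le_refl _⟩
      · obtain ⟨h1, h2⟩ := IH _ (stp_lt h) y hy'
        exact ⟨h1, h2.trans (le_of_lt (stp_lt h))⟩

omit hl in
lemma wlk_finite {α x : Ordinal} : (wlk lam α x).Finite := by
  induction x using Ordinal.induction with
  | _ x IH =>
    by_cases h : x ≤ α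
    · rw [wlk_of_le h]; exact finite_empty
    · push_neg at h
      rw [wlk_of_lt h]
      exact (IH _ (stp_lt h)).insert x

/-- Key decomposition lemma: walks from above `δ` pass through `δ`
provided the target is in some interval `(γ, δ)`. -/
lemma keyB {δ : Ordinal} (hδcof : δ.cof = lam) :
    ∀ x, δ ≤ x → x < κo lam →
      ∃ γ < δ, ∀ α, γ < α → α < δ → wlk lam α x = wlk lam δ x ∪ wlk lam α δ := by
  have hδlim : Order.IsSuccLimit δ := aleph0_le_cof.mp (hδcof ▸ hl)
  intro x
  induction x using Ordinal.induction with
  | _ x IH =>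
    intro hδx hxκ
    rcases eq_or_lt_of_le hδx with rfl | hlt
    · refine ⟨0, hδlim.pos, ?_⟩
      intro α _ _
      rw [wlk_of_le (le_refl _), Set.empty_union]
    · have hx0 : 0 < x := hδlim.pos.trans hlt
      obtain ⟨hsC, hsge⟩ := stp_mem hl hlt hxκ
      have hslt : stp lam δ x < x := stp_lt hlt
      obtain ⟨γs, hγs, hIHs⟩ := IH _ hslt hsge (hslt.trans hxκ)
      obtain ⟨γb, hγb, hbd⟩ := Cs_bdd hl hx0 hxκ δ hδcof hlt
      refine ⟨max γs γb, max_lt hγs hγb, ?_⟩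
      intro α hγα hαδ
      have hαx : α < x := hαδ.trans hlt
      have hsame : Cs lam x ∩ Ici α = Cs lam x ∩ Ici δ := by
        ext y
        constructor
        · rintro ⟨hyC, hyα⟩
          refine ⟨hyC, ?_⟩
          rcases lt_or_ge y δ with hyd | hyd
          · exfalso
            have hyγ : y ≤ max γs γb := (hbd y hyC hyd).trans (le_max_right γs γb)
            have : y < α := hyγ.trans_lt hγα
            exact absurd (mem_Ici.mp hyα) (not_le.mpr this)
          · exact mem_Ici.mpr hyd
        · rintro ⟨hyC, hyδ⟩
          exact ⟨hyC, (le_of_lt hαδ).trans hyδ⟩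
      have hstp : stp lam α x = stp lam δ x := by rw [stp, stp, hsame]
      rw [wlk_of_lt hαx, wlk_of_lt hlt, hstp,
        hIHs α ((le_max_left γs γb).trans_lt hγα) hαδ, Set.insert_union]

lemma keyB_mem {δ : Ordinal} (hδcof : δ.cof = lam) {x : Ordinal} (hδx : δ ≤ x) (hxκ : x < κo lam) :
    ∃ γ < δ, ∀ α, γ < α → α < δ → δ ∈ wlk lam α x := by
  obtain ⟨γ, hγ, hdec⟩ := keyB hl hδcof x hδx hxκ
  refine ⟨γ, hγ, fun α h1 h2 => ?_⟩
  rw [hdec α h1 h2]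
  exact Set.mem_union_right _ (self_mem_wlk h2)


/-! ### Clubs and stationary sets in `κo` -/

variable (lam) in
/-- Club in `κo`. -/
def club (D : Set Ordinal) : Prop :=
  (∀ α < κo lam, ∃ β ∈ D, α < β ∧ β < κo lam) ∧
    ∀ x < κo lam, (∀ y < x, ∃ z ∈ D, y < z ∧ z < x) → x ∈ D

variable (lam) in
/-- Stationary in `κo`. -/
def stat (T : Set Ordinal) : Prop := ∀ D, club lam D → ∃ δ, δ ∈ T ∧ δ ∈ D

lemma exists_closure_pt (g : Ordinal → Ordinal) (hg : ∀ y < κo lam, g y < κo lam)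
    {α : Ordinal} (hα : α < κo lam) :
    ∃ x, α < x ∧ x < κo lam ∧ ∀ y < x, g y < x := by
  classical
  have hsucc : ∀ z : Ordinal, z < κo lam → z + 1 < κo lam := by
    intro z hz
    rw [Ordinal.add_one_eq_succ]
    exact (κo_limit lam hl).succ_lt hz
  let seq : ℕ → Ordinal := fun n => Nat.rec (α + 1)
    (fun _ p => max (p + 1) ((Ordinal.bsup p (fun y _ => g y)) + 1)) n
  have hseq_succ : ∀ n, seq (n + 1) =
      max (seq n + 1) ((Ordinal.bsup (seq n) (fun y _ => g y)) + 1) := fun n => rfl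
  have hseq_lt : ∀ n, seq n < κo lam := by
    intro n
    induction n with
    | zero => exact hsucc α hα
    | succ n ih =>
      rw [hseq_succ]
      apply max_lt (hsucc _ ih)
      apply hsucc
      apply Ordinal.bsup_lt_ord
      · rw [cof_κo lam hl]
        exact (card_le_of_lt_κo lam ih).trans_lt (Order.lt_succ lam)
      · intro y hy
        exact hg y (hy.trans ih)
  have hmono : ∀ n, seq n < seq (n + 1) := by
    intro n
    rw [hseq_succ]
    exact lt_max_of_lt_left (lt_add_one _)
  refine ⟨iSup seq, (lt_add_one α).trans_le (Ordinal.le_iSup seq 0), ?_, ?_⟩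
  · apply Ordinal.iSup_lt_ord _ hseq_lt
    rw [Cardinal.mk_denumerable, cof_κo lam hl]
    exact hl.trans_lt (Order.lt_succ lam)
  · intro y hy
    obtain ⟨n, hn⟩ := Ordinal.lt_iSup_iff.mp hy
    have h1 : g y ≤ Ordinal.bsup (seq n) (fun y _ => g y) := Ordinal.le_bsup _ y hn
    have h2 : Ordinal.bsup (seq n) (fun y _ => g y) < seq (n + 1) := by
      rw [hseq_succ]
      exact lt_max_of_lt_right (lt_add_one _)
    exact (h1.trans_lt h2).trans_le (Ordinal.le_iSup seq (n + 1))


lemma club_iInter (D : Ordinal → Set Ordinal) (hD : ∀ ζ < lam.ord, club lam (D ζ)) :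
    club lam {x | ∀ ζ < lam.ord, x ∈ D ζ} := by
  classical
  constructor
  · -- unbounded
    intro α hα
    set pick : Ordinal → Ordinal → Ordinal := fun ζ y =>
      if h : ζ < lam.ord ∧ y < κo lam then ((hD ζ h.1).1 y h.2).choose else 0 with hpick
    have hpick_spec : ∀ ζ y, ζ < lam.ord → y < κo lam →
        pick ζ y ∈ D ζ ∧ y < pick ζ y ∧ pick ζ y < κo lam := by
      intro ζ y h1 h2
      rw [hpick]
      simp only [dif_pos (⟨h1, h2⟩ : ζ < lam.ord ∧ y < κo lam)]
      obtain ⟨h3, h4, h5⟩ := ((hD ζ h1).1 y h2).choose_spec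
      exact ⟨h3, h4, h5⟩
    set g : Ordinal → Ordinal := fun y => (Ordinal.bsup lam.ord (fun ζ _ => pick ζ y)) + 1 with hg
    have hgκ : ∀ y < κo lam, g y < κo lam := by
      intro y hy
      show (Ordinal.bsup lam.ord (fun ζ _ => pick ζ y)) + 1 < κo lam
      rw [Ordinal.add_one_eq_succ]
      apply (κo_limit lam hl).succ_lt
      apply Ordinal.bsup_lt_ord
      · rw [Cardinal.card_ord, cof_κo lam hl]; exact Order.lt_succ lam
      · intro ζ hζ; exact (hpick_spec ζ y hζ hy).2.2
    obtain ⟨x, hαx, hxκ, hcl⟩ := exists_closure_pt hl g hgκ hα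
    refine ⟨x, ?_, hαx, hxκ⟩
    intro ζ hζ
    apply (hD ζ hζ).2 x hxκ
    intro y hy
    refine ⟨pick ζ y, (hpick_spec ζ y hζ (hy.trans hxκ)).1,
      (hpick_spec ζ y hζ (hy.trans hxκ)).2.1, ?_⟩
    calc pick ζ y ≤ Ordinal.bsup lam.ord (fun ζ _ => pick ζ y) := Ordinal.le_bsup _ ζ hζ
      _ < g y := lt_add_one _
      _ < x := hcl y hy
  · -- closed
    intro x hx hcl ζ hζ
    apply (hD ζ hζ).2 x hx
    intro y hy
    obtain ⟨z, hz1, hz2, hz3⟩ := hcl y hy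
    exact ⟨z, hz1 ζ hζ, hz2, hz3⟩

lemma E_meets (hreg : lam.IsRegular) {D : Set Ordinal} (hD : club lam D) {ε : Ordinal}
    (hε : ε < κo lam) : ∃ δ, δ.cof = lam ∧ δ ∈ D ∧ ε < δ ∧ δ < κo lam := by
  classical
  have hl : ℵ₀ ≤ lam := hreg.1
  set pickD : Ordinal → Ordinal := fun y =>
    if h : y < κo lam then (hD.1 y h).choose else 0 with hpickD
  have hpickD_spec : ∀ y < κo lam, pickD y ∈ D ∧ y < pickD y ∧ pickD y < κo lam := by
    intro y h
    rw [hpickD]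
    simp only [dif_pos h]
    obtain ⟨h1, h2, h3⟩ := (hD.1 y h).choose_spec
    exact ⟨h1, h2, h3⟩
  set G : Ordinal → Ordinal := Ordinal.lt_wf.fix
    (fun i IH => pickD (max ε (Ordinal.bsup i (fun j hj => IH j hj)))) with hG
  have hGeq : ∀ i, G i = pickD (max ε (Ordinal.bsup i (fun j _ => G j))) := by
    intro i
    rw [hG]
    exact Ordinal.lt_wf.fix_eq _ i
  have hGlt : ∀ i < lam.ord, G i < κo lam ∧
      max ε (Ordinal.bsup i (fun j _ => G j)) < G i ∧ G i ∈ D := by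
    intro i hi
    induction i using Ordinal.induction with
    | _ i IH =>
      have hbnd : max ε (Ordinal.bsup i (fun j _ => G j)) < κo lam := by
        apply max_lt hε
        apply Ordinal.bsup_lt_ord
        · rw [cof_κo lam hl]
          exact (Cardinal.lt_ord.mp hi).trans (Order.lt_succ lam)
        · intro j hj
          exact (IH j hj (hj.trans hi)).1
      obtain ⟨h1, h2, h3⟩ := hpickD_spec _ hbnd
      rw [← hGeq] at h1 h2 h3
      exact ⟨h3, h2, h1⟩

  have hGmono : ∀ i j, i < j → j < lam.ord → G i < G j := by
    intro i j hij hj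
    calc G i ≤ Ordinal.bsup j (fun k _ => G k) := Ordinal.le_bsup _ i hij
      _ ≤ max ε (Ordinal.bsup j (fun k _ => G k)) := le_max_right _ _
      _ < G j := (hGlt j hj).2.1
  have hlamord_limit : Order.IsSuccLimit lam.ord := Cardinal.isSuccLimit_ord hl
  set δ := Ordinal.blsub lam.ord (fun i _ => G i) with hδ
  have hδκ : δ < κo lam := by
    rw [hδ]
    apply Ordinal.blsub_lt_ord
    · rw [Cardinal.card_ord, cof_κo lam hl]; exact Order.lt_succ lam
    · intro i hi; exact (hGlt i hi).1
  have hεδ : ε < δ := by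
    have h0 : (0 : Ordinal) < lam.ord := hlamord_limit.pos
    have h1 : ε < G 0 := (le_max_left _ _).trans_lt (hGlt 0 h0).2.1
    exact h1.trans (Ordinal.lt_blsub (fun i _ => G i) 0 h0)
  have hδD : δ ∈ D := by
    apply hD.2 δ hδκ
    intro y hy
    rw [hδ] at hy
    obtain ⟨i, hi, hyG⟩ := Ordinal.lt_blsub_iff.mp hy
    have hi1 : i + 1 < lam.ord := by
      rw [Ordinal.add_one_eq_succ]; exact hlamord_limit.succ_lt hi
    refine ⟨G (i + 1), (hGlt _ hi1).2.2, ?_, ?_⟩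
    · exact hyG.trans_lt (hGmono i (i + 1) (lt_add_one i) hi1)
    · rw [hδ]; exact Ordinal.lt_blsub _ _ hi1
  have hδcof : δ.cof = lam := by
    apply le_antisymm
    · rw [hδ]
      have := Ordinal.cof_blsub_le (fun (i : Ordinal) (_ : i < lam.ord) => G i)
      rwa [Cardinal.card_ord] at this
    · rw [Ordinal.le_cof_iff_blsub]
      intro o f hfδ
      by_contra hc
      push_neg at hc
      have hcho : ∀ i (hi : i < o), ∃ j, ∃ hj : j < lam.ord, f i hi ≤ G j := by
        intro i hi
        have : f i hi < δ := by rw [← hfδ]; exact Ordinal.lt_blsub f i hi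
        rw [hδ] at this
        obtain ⟨j, hj, hle⟩ := Ordinal.lt_blsub_iff.mp this
        exact ⟨j, hj, hle⟩
      classical
      set cho : ∀ i, i < o → Ordinal := fun i hi => (hcho i hi).choose with hchodef
      have hcho_lt : ∀ i (hi : i < o), cho i hi < lam.ord := fun i hi => (hcho i hi).choose_spec.1
      have hcho_le : ∀ i (hi : i < o), f i hi ≤ G (cho i hi) := by
        intro i hi
        obtain ⟨hj, hle⟩ := (hcho i hi).choose_spec
        exact hle
      set J := Ordinal.bsup o (fun i hi => cho i hi + 1) with hJ
      have hJlt : J < lam.ord := by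
        rw [hJ]
        apply Ordinal.bsup_lt_ord
        · rw [hreg.cof_eq]; exact hc
        · intro i hi
          rw [Ordinal.add_one_eq_succ]
          exact hlamord_limit.succ_lt (hcho_lt i hi)
      have hall : ∀ i (hi : i < o), f i hi < G J := by
        intro i hi
        have h1 : cho i hi + 1 ≤ J := Ordinal.le_bsup _ i hi
        have h2 : cho i hi < J := lt_of_lt_of_le (lt_add_one _) h1
        exact (hcho_le i hi).trans_lt (hGmono _ _ h2 hJlt)
      have : δ ≤ G J := by rw [← hfδ]; exact Ordinal.blsub_le_iff.mpr hall
      have hGJδ : G J < δ := by rw [hδ]; exact Ordinal.lt_blsub _ _ hJlt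
      exact absurd (this.trans_lt hGJδ) (lt_irrefl δ)
  exact ⟨δ, hδcof, hδD, hεδ, hδκ⟩

lemma pseudoFodor {T : Set Ordinal} (hT : stat lam T) (hTsub : T ⊆ Iio (κo lam))
    (F : Ordinal → Ordinal) (hF : ∀ δ ∈ T, F δ < δ) :
    ∃ ε < κo lam, ∀ α < κo lam, ∃ δ ∈ T, F δ ≤ ε ∧ α < δ := by
  classical
  by_contra hc
  push_neg at hc
  -- for each ε there is a bound α(ε) beyond which no δ ∈ T has F δ ≤ ε
  set b : Ordinal → Ordinal := fun ε => if h : ε < κo lam then (hc ε h).choose else 0 with hb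
  have hbspec : ∀ ε < κo lam, b ε < κo lam ∧ ∀ δ ∈ T, F δ ≤ ε → δ ≤ b ε := by
    intro ε hε
    rw [hb]
    simp only [dif_pos hε]
    obtain ⟨h1, h2⟩ := (hc ε hε).choose_spec
    exact ⟨h1, h2⟩
  have hbκ : ∀ ε < κo lam, b ε < κo lam := fun ε hε => (hbspec ε hε).1
  have hDg : club lam {x | ∀ y < x, b y < x} := by
    constructor
    · intro α hα
      obtain ⟨x, h1, h2, h3⟩ := exists_closure_pt hl b (fun y hy => (hbspec y hy).1) hα
      exact ⟨x, h3, h1, h2⟩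
    · intro x hx hcl y hy
      obtain ⟨z, hz1, hz2, hz3⟩ := hcl y hy
      exact (hz1 y hz2).trans hz3
  obtain ⟨δ, hδT, hδD⟩ := hT _ hDg
  have h1 : F δ < δ := hF δ hδT
  have hδκ : δ < κo lam := hTsub hδT
  have h2 : b (F δ) < δ := hδD (F δ) h1
  have h3 : δ ≤ b (F δ) := (hbspec (F δ) (h1.trans hδκ)).2 δ hδT (le_refl _)
  exact absurd (h3.trans_lt h2) (lt_irrefl δ)


/-! ### Ulam-style disjoint stationary sets -/

lemma exists_inj (hδκ : ∀ δ:Ordinal, δ < κo lam → δ.card ≤ lam) : True := trivial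

omit hl in
lemma inj_exists {δ : Ordinal} (hδ : δ < κo lam) :
    Nonempty (↥(Iio δ) ↪ ↥(Iio lam.ord)) := by
  rw [← Cardinal.le_def, Ordinal.mk_Iio_ordinal, Ordinal.mk_Iio_ordinal, Cardinal.card_ord]
  exact Cardinal.lift_le.mpr (card_le_of_lt_κo lam hδ)

variable (lam) in
/-- A system of injections `Iio δ ↪ Iio lam.ord`. -/
def inje (δ x : Ordinal) : Ordinal :=
  if h : δ < κo lam ∧ x < δ then ((inj_exists h.1).some ⟨x, h.2⟩ : ↥(Iio lam.ord)).val else 0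

omit hl in
lemma inje_lt {δ x : Ordinal} (hδ : δ < κo lam) (hx : x < δ) : inje lam δ x < lam.ord := by
  rw [inje, dif_pos (⟨hδ, hx⟩ : δ < κo lam ∧ x < δ)]
  exact ((inj_exists hδ).some ⟨x, hx⟩).2

omit hl in
lemma inje_inj {δ x y : Ordinal} (hδ : δ < κo lam) (hx : x < δ) (hy : y < δ)
    (h : inje lam δ x = inje lam δ y) : x = y := by
  rw [inje, dif_pos (⟨hδ, hx⟩ : δ < κo lam ∧ x < δ), inje,
    dif_pos (⟨hδ, hy⟩ : δ < κo lam ∧ y < δ)] at h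
  have h2 := (inj_exists hδ).some.injective (Subtype.ext h)
  exact congrArg Subtype.val h2

lemma ulam1 (hreg : lam.IsRegular) {ε : Ordinal} (hε : ε < κo lam) :
    ∃ ζ < lam.ord, stat lam {δ | δ.cof = lam ∧ ε < δ ∧ δ < κo lam ∧ inje lam δ ε = ζ} := by
  classical
  by_contra hcon
  push_neg at hcon
  have hneg : ∀ ζ, ζ < lam.ord → ∃ D, club lam D ∧
      ∀ δ, δ ∈ {δ | δ.cof = lam ∧ ε < δ ∧ δ < κo lam ∧ inje lam δ ε = ζ} → δ ∉ D := by
    intro ζ hζ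
    have := hcon ζ hζ
    rw [stat] at this
    push_neg at this
    obtain ⟨D, hD, hdisj⟩ := this
    exact ⟨D, hD, fun δ h1 h2 => hdisj δ h1 h2⟩
  set Dz : Ordinal → Set Ordinal := fun ζ =>
    if h : ζ < lam.ord then (hneg ζ h).choose else ∅ with hDz
  have hDzclub : ∀ ζ < lam.ord, club lam (Dz ζ) := by
    intro ζ hζ
    rw [hDz]; simp only [dif_pos hζ]
    exact (hneg ζ hζ).choose_spec.1
  have hDzdisj : ∀ ζ (hζ : ζ < lam.ord) δ, δ.cof = lam → ε < δ → δ < κo lam →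
      inje lam δ ε = ζ → δ ∉ Dz ζ := by
    intro ζ hζ δ h1 h2 h3 h4
    rw [hDz]; simp only [dif_pos hζ]
    exact (hneg ζ hζ).choose_spec.2 δ ⟨h1, h2, h3, h4⟩
  obtain ⟨δ, hδcof, hδD, hεδ, hδκ⟩ := E_meets hl hreg (club_iInter hl Dz hDzclub) hε
  have hζ' : inje lam δ ε < lam.ord := inje_lt hδκ hεδ
  exact hDzdisj _ hζ' δ hδcof hεδ hδκ rfl (hδD _ hζ')


/-! ### Bounding small sets of ordinals -/

omit hl in
lemma bdd_of_card_le {s : Set Ordinal} {μ : Cardinal.{0}}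
    (hs : Cardinal.mk ↥s ≤ Cardinal.lift.{1,0} μ)
    {c : Ordinal} (hμ : μ < c.cof) (hsub : ∀ y ∈ s, y < c) : ∃ γ < c, ∀ y ∈ s, y ≤ γ := by
  classical
  have hc0 : (0 : Ordinal) < c := by
    rcases eq_zero_or_pos c with rfl | h
    · rw [Ordinal.cof_zero] at hμ
      exact absurd hμ (Cardinal.zero_le μ).not_gt
    · exact h
  have hmk : Cardinal.mk ↥s ≤ Cardinal.mk (ULift.{1,0} (μ.ord.ToType)) := by
    rwa [Cardinal.mk_uLift, Cardinal.mk_toType, Cardinal.card_ord]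
  obtain ⟨E⟩ := (Cardinal.le_def _ _).mp hmk
  set f : μ.ord.ToType → Ordinal := fun i =>
    if h : ∃ y : ↥s, E y = ⟨i⟩ then (h.choose : ↥s).val else 0 with hf
  have hfval : ∀ i, f i < c := by
    intro i
    show (if h : ∃ y : ↥s, E y = ⟨i⟩ then (h.choose : ↥s).val else 0) < c
    split
    · next h => exact hsub _ (h.choose).2
    · exact hc0
  refine ⟨iSup f, ?_, ?_⟩
  · apply Ordinal.iSup_lt_ord _ hfval
    rwa [Cardinal.mk_toType, Cardinal.card_ord]
  · intro y hy
    have hex : ∃ y' : ↥s, E y' = ⟨(E ⟨y, hy⟩).down⟩ := ⟨⟨y, hy⟩, rfl⟩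
    have : f (E ⟨y, hy⟩).down = y := by
      show (if h : ∃ y' : ↥s, E y' = ⟨(E ⟨y, hy⟩).down⟩ then (h.choose : ↥s).val else 0) = y
      rw [dif_pos hex]
      have h2 : hex.choose = (⟨y, hy⟩ : ↥s) := by
        apply E.injective
        rw [hex.choose_spec]
      rw [h2]
    rw [← this]
    exact Ordinal.le_iSup f _

variable (lam) in
/-- The guard ordinal for the key lemma. -/
def gW (δ β : Ordinal) : Ordinal :=
  if h : ℵ₀ ≤ lam ∧ δ.cof = lam ∧ δ ≤ β ∧ β < κo lam then
    (keyB_mem h.1 h.2.1 h.2.2.1 h.2.2.2).choose else 0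

lemma gW_spec {δ β : Ordinal} (hδcof : δ.cof = lam) (hδβ : δ ≤ β) (hβ : β < κo lam) :
    gW lam δ β < δ ∧ ∀ α, gW lam δ β < α → α < δ → δ ∈ wlk lam α β := by
  rw [gW, dif_pos (⟨hl, hδcof, hδβ, hβ⟩ : ℵ₀ ≤ lam ∧ δ.cof = lam ∧ δ ≤ β ∧ β < κo lam)]
  obtain ⟨h1, h2⟩ := (keyB_mem hl hδcof hδβ hβ).choose_spec
  exact ⟨h1, h2⟩


/-! ### The main construction -/

theorem main (hlam : lam.IsRegular) (θ : Cardinal.{0}) (hθreg : θ.IsRegular) (hθlam : θ ≤ lam) :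
    ∃ c : Ordinal → Ordinal → Ordinal,
      (∀ α β : Ordinal, c α β < θ.ord) ∧
      (∀ χ' : Cardinal.{0}, χ' < lam → ∀ A : Set (Set Ordinal),
        (∀ a ∈ A, a ⊆ Iio (κo lam) ∧ Cardinal.mk ↥a = Cardinal.lift.{1,0} χ') →
        A.PairwiseDisjoint id → Cardinal.mk ↥A = Cardinal.lift.{1,0} (Order.succ lam) →
        ∀ i < θ.ord, ∃ B ⊆ A, Cardinal.mk ↥B = Cardinal.lift.{1,0} (Order.succ lam) ∧
          ∀ a ∈ B, ∀ b ∈ B, (∀ α ∈ a, ∀ β ∈ b, α < β) →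
            ∀ α ∈ a, ∀ β ∈ b, i < c α β) := by
  classical
  have hl : ℵ₀ ≤ lam := hlam.aleph0_le
  have hθl : ℵ₀ ≤ θ := hθreg.aleph0_le
  have hθord : Order.IsSuccLimit θ.ord := Cardinal.isSuccLimit_ord hθl
  -- pigeonhole for a uniform Ulam column
  set zfun : Ordinal → Ordinal := fun ε =>
    if h : ε < κo lam then (ulam1 hl hlam h).choose else 0 with hzfun
  have zfun_spec : ∀ ε, ∀ hε : ε < κo lam, zfun ε < lam.ord ∧
      stat lam {δ | δ.cof = lam ∧ ε < δ ∧ δ < κo lam ∧ inje lam δ ε = zfun ε} := by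
    intro ε hε
    have h1 := (ulam1 hl hlam hε).choose_spec
    rw [hzfun]
    simp only [dif_pos hε]
    exact h1
  have hmkκ : Cardinal.mk ↥(Iio (κo lam)) = Cardinal.lift.{1,0} (Order.succ lam) := by
    rw [Ordinal.mk_Iio_ordinal, κo, Cardinal.card_ord]
  have hmkl : Cardinal.mk ↥(Iio lam.ord) = Cardinal.lift.{1,0} lam := by
    rw [Ordinal.mk_Iio_ordinal, Cardinal.card_ord]
  have hmkθ : Cardinal.mk ↥(Iio θ.ord) = Cardinal.lift.{1,0} θ := by
    rw [Ordinal.mk_Iio_ordinal, Cardinal.card_ord]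
  set f : ↥(Iio (κo lam)) → ↥(Iio lam.ord) :=
    fun ε => ⟨zfun ε.val, (zfun_spec ε.val ε.2).1⟩ with hfdef
  have h₁ : ℵ₀ ≤ Cardinal.mk ↥(Iio (κo lam)) := by
    rw [hmkκ]
    exact Cardinal.aleph0_le_lift.mpr (hl.trans (Order.le_succ lam))
  have h₂ : Cardinal.mk ↥(Iio lam.ord) < (Cardinal.mk ↥(Iio (κo lam))).ord.cof := by
    rw [hmkκ, hmkl, ← Cardinal.lift_ord, ← Ordinal.lift_cof,
      (isRegular_succ hl).cof_eq]
    exact Cardinal.lift_lt.mpr (Order.lt_succ lam)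
  obtain ⟨za, hza⟩ := Cardinal.infinite_pigeonhole f h₁ h₂
  have hembθ : Nonempty (↥(Iio θ.ord) ↪ ↥(f ⁻¹' {za})) := by
    apply (Cardinal.le_def _ _).mp
    rw [hmkθ, hza, hmkκ]
    exact Cardinal.lift_le.mpr (hθlam.trans (Order.le_succ lam))
  set E2 := hembθ.some with hE2
  set εe : Ordinal → Ordinal := fun jj =>
    if h : jj < θ.ord then (((E2 ⟨jj, h⟩ : ↥(f ⁻¹' {za})) : ↥(Iio (κo lam))) : Ordinal) else 0
    with hεe
  have hεeκ : ∀ jj < θ.ord, εe jj < κo lam := by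
    intro jj h
    rw [hεe]; simp only [dif_pos h]
    exact ((E2 ⟨jj, h⟩ : ↥(f ⁻¹' {za})) : ↥(Iio (κo lam))).2
  have hεez : ∀ jj, ∀ h : jj < θ.ord, zfun (εe jj) = za.val := by
    intro jj h
    have hmem := (E2 ⟨jj, h⟩).2
    rw [Set.mem_preimage, Set.mem_singleton_iff] at hmem
    show zfun (if h' : jj < θ.ord then (((E2 ⟨jj, h'⟩ : ↥(f ⁻¹' {za})) : ↥(Iio (κo lam))) : Ordinal) else 0) = za.val
    rw [dif_pos h]
    exact congrArg Subtype.val hmem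
  have hεeinj : ∀ jj jj', jj < θ.ord → jj' < θ.ord → εe jj = εe jj' → jj = jj' := by
    intro jj jj' h h' heq
    rw [hεe] at heq
    simp only [dif_pos h, dif_pos h'] at heq
    have h2 : E2 ⟨jj, h⟩ = E2 ⟨jj', h'⟩ := Subtype.ext (Subtype.ext heq)
    have h3 := E2.injective h2
    exact congrArg Subtype.val h3
  -- the disjoint stationary system
  set SS : Ordinal → Set Ordinal := fun jj =>
    {δ | δ.cof = lam ∧ εe jj < δ ∧ δ < κo lam ∧ inje lam δ (εe jj) = za.val} with hSS
  have hSSstat : ∀ jj < θ.ord, stat lam (SS jj) := by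
    intro jj h
    have := (zfun_spec (εe jj) (hεeκ jj h)).2
    rwa [hεez jj h] at this
  have hSSdisj : ∀ jj jj', jj < θ.ord → jj' < θ.ord → jj ≠ jj' →
      ∀ δ, δ ∈ SS jj → δ ∈ SS jj' → False := by
    intro jj jj' h h' hne δ hm hm'
    obtain ⟨hc1, hlt1, hκ1, hii1⟩ := hm
    obtain ⟨hc2, hlt2, hκ2, hii2⟩ := hm'
    exact hne (hεeinj jj jj' h h' (inje_inj hκ1 hlt1 hlt2 (hii1.trans hii2.symm)))
  -- labels
  set L : Ordinal → Ordinal := fun δ =>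
    if h : ∃ jj, jj < θ.ord ∧ δ ∈ SS jj then h.choose else 0 with hL
  have hLlt : ∀ δ, L δ < θ.ord := by
    intro δ
    show (if h : ∃ jj, jj < θ.ord ∧ δ ∈ SS jj then h.choose else 0) < θ.ord
    split
    · next h => exact h.choose_spec.1
    · exact hθord.pos
  have hLeq : ∀ jj, jj < θ.ord → ∀ δ ∈ SS jj, L δ = jj := by
    intro jj h δ hδ
    have hex : ∃ jj', jj' < θ.ord ∧ δ ∈ SS jj' := ⟨jj, h, hδ⟩
    show (if h : ∃ jj', jj' < θ.ord ∧ δ ∈ SS jj' then h.choose else 0) = jj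
    rw [dif_pos hex]
    by_contra hne
    exact hSSdisj _ _ hex.choose_spec.1 h hne δ hex.choose_spec.2 hδ
  set SSu : Set Ordinal := {w | ∃ jj, jj < θ.ord ∧ w ∈ SS jj} with hSSu
  -- the coloring
  set cfun : Ordinal → Ordinal → Ordinal :=
    fun α β => sSup (L '' (wlk lam α β ∩ SSu)) with hcfun
  have himfin : ∀ α β : Ordinal, (L '' (wlk lam α β ∩ SSu)).Finite :=
    fun α β => (wlk_finite.subset Set.inter_subset_left).image L
  have hcol : ∀ α β : Ordinal, cfun α β < θ.ord := by
    intro α β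
    show sSup (L '' (wlk lam α β ∩ SSu)) < θ.ord
    rcases (L '' (wlk lam α β ∩ SSu)).eq_empty_or_nonempty with he | hne
    · rw [he, csSup_empty]
      exact hθord.pos
    · have := hne.csSup_mem (himfin α β)
      obtain ⟨w, _, hw⟩ := this
      rw [← hw]
      exact hLlt w
  refine ⟨cfun, hcol, ?_⟩
  intro χ' hχ' A hAmem hAdisj hAcard i hi
  -- the target color
  set j : Ordinal := i + 1 with hjdef
  have hjθ : j < θ.ord := by
    rw [hjdef, Ordinal.add_one_eq_succ]
    exact hθord.succ_lt hi
  have hij : i < j := lt_add_one i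
  -- `χ' ≠ 0`
  have hχ0 : χ' ≠ 0 := by
    rintro rfl
    have hsub : A ⊆ {(∅ : Set Ordinal)} := by
      intro a ha
      have h0 : Cardinal.mk ↥a = 0 := by
        rw [(hAmem a ha).2, Cardinal.lift_zero]
      rw [Set.mem_singleton_iff, ← Set.isEmpty_coe_sort]
      exact Cardinal.mk_eq_zero_iff.mp h0
    have h1 : Cardinal.mk ↥A ≤ 1 := le_trans (Cardinal.mk_le_mk_of_subset hsub) (by
      simpa using Cardinal.mk_le_one_iff_set_subsingleton.mpr (Set.subsingleton_singleton))
    rw [hAcard] at h1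
    have h2 : ℵ₀ ≤ Cardinal.lift.{1,0} (Order.succ lam) :=
      Cardinal.aleph0_le_lift.mpr (hl.trans (Order.le_succ lam))
    exact absurd (h2.trans h1) (by simp)
  have hane : ∀ a ∈ A, a.Nonempty := by
    intro a ha
    rw [← Set.nonempty_coe_sort]
    apply Cardinal.mk_ne_zero_iff.mp
    rw [(hAmem a ha).2]
    simp [hχ0]
  -- selecting sets above any bound
  have hbsel : ∀ δ < κo lam, ∃ b, b ∈ A ∧ ∀ x ∈ b, δ < x := by
    intro δ hδ
    by_contra hno
    push_neg at hno
    have hwit : ∀ b : ↥A, ∃ x, x ∈ b.val ∧ x ≤ δ := by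
      rintro ⟨b, hb⟩
      obtain ⟨x, hx1, hx2⟩ := hno b hb
      exact ⟨x, hx1, hx2⟩
    set w : ↥A → ↥(Iic δ) := fun b => ⟨(hwit b).choose, (hwit b).choose_spec.2⟩ with hw
    have hwinj : Function.Injective w := by
      intro b₁ b₂ heq
      by_contra hne
      have hvalne : b₁.val ≠ b₂.val := fun hv => hne (Subtype.ext hv)
      have hdisj := hAdisj b₁.2 b₂.2 hvalne
      have h1 : (hwit b₁).choose ∈ b₁.val := (hwit b₁).choose_spec.1
      have h2 : (hwit b₂).choose ∈ b₂.val := (hwit b₂).choose_spec.1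
      have h3 : (hwit b₁).choose = (hwit b₂).choose := congrArg Subtype.val heq
      rw [h3] at h1
      exact Set.disjoint_left.mp hdisj h1 h2
    have hcard1 : Cardinal.mk ↥A ≤ Cardinal.mk ↥(Iic δ) := Cardinal.mk_le_of_injective hwinj
    have hIic : Cardinal.mk ↥(Iic δ) ≤ Cardinal.lift.{1,0} lam := by
      have : (Iic δ) = Iio (Order.succ δ) := (Order.Iio_succ_of_not_isMax (not_isMax δ)).symm
      rw [this, Ordinal.mk_Iio_ordinal]
      apply Cardinal.lift_le.mpr
      apply card_le_of_lt_κo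
      exact (κo_limit lam hl).succ_lt hδ
    rw [hAcard] at hcard1
    have := hcard1.trans hIic
    rw [Cardinal.lift_le] at this
    exact absurd this (not_le.mpr (Order.lt_succ lam))
  set bsel : Ordinal → Set Ordinal := fun δ =>
    if h : δ < κo lam then (hbsel δ h).choose else ∅ with hbseldef
  have hbsel_spec : ∀ δ < κo lam, bsel δ ∈ A ∧ ∀ x ∈ bsel δ, δ < x := by
    intro δ h
    show (if h : δ < κo lam then (hbsel δ h).choose else ∅) ∈ A ∧
      ∀ x ∈ (if h : δ < κo lam then (hbsel δ h).choose else ∅), δ < x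
    rw [dif_pos h]
    exact (hbsel δ h).choose_spec
  -- sup bounds of selected sets
  have hsb : ∀ δ < κo lam, ∃ γ < κo lam, ∀ x ∈ bsel δ, x ≤ γ := by
    intro δ h
    have hmem := (hbsel_spec δ h).1
    apply bdd_of_card_le (le_of_eq (hAmem _ hmem).2)
    · rw [cof_κo lam hl]
      exact hχ'.trans (Order.lt_succ lam)
    · intro y hy
      exact (hAmem _ hmem).1 hy
  set sb : Ordinal → Ordinal := fun δ => if h : δ < κo lam then (hsb δ h).choose else 0 with hsbdef
  have hsb_spec : ∀ δ < κo lam, sb δ < κo lam ∧ ∀ x ∈ bsel δ, x ≤ sb δ := by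
    intro δ h
    show (if h : δ < κo lam then (hsb δ h).choose else 0) < κo lam ∧
      ∀ x ∈ bsel δ, x ≤ (if h : δ < κo lam then (hsb δ h).choose else 0)
    rw [dif_pos h]
    obtain ⟨h1, h2⟩ := (hsb δ h).choose_spec
    exact ⟨h1, h2⟩
  -- the stationary set for this color, and the regressive bound
  have hTsub : SS j ⊆ Iio (κo lam) := fun δ hδ => hδ.2.2.1
  have hFex : ∀ δ ∈ SS j, ∃ γ < δ, ∀ β ∈ bsel δ, gW lam δ β ≤ γ := by
    intro δ hδ
    obtain ⟨hδcof, _, hδκ, _⟩ := hδ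
    have hmem := (hbsel_spec δ hδκ).1
    have himg : Cardinal.mk ↥((gW lam δ) '' (bsel δ)) ≤ Cardinal.lift.{1,0} χ' := by
      refine le_trans (Cardinal.mk_image_le) (le_of_eq (hAmem _ hmem).2)
    have hsubδ : ∀ y ∈ (gW lam δ) '' (bsel δ), y < δ := by
      rintro y ⟨β, hβ, rfl⟩
      have hδβ : δ < β := (hbsel_spec δ hδκ).2 β hβ
      have hβκ : β < κo lam := (hAmem _ hmem).1 hβ
      exact (gW_spec hl hδcof hδβ.le hβκ).1
    obtain ⟨γ, hγ, hbd⟩ := bdd_of_card_le himg (c := δ) (by rw [hδcof]; exact hχ') hsubδ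
    exact ⟨γ, hγ, fun β hβ => hbd _ (Set.mem_image_of_mem _ hβ)⟩
  set F : Ordinal → Ordinal := fun δ => if h : δ ∈ SS j then (hFex δ h).choose else 0 with hFdef
  have hF_spec : ∀ δ ∈ SS j, F δ < δ ∧ ∀ β ∈ bsel δ, gW lam δ β ≤ F δ := by
    intro δ h
    show (if h : δ ∈ SS j then (hFex δ h).choose else 0) < δ ∧
      ∀ β ∈ bsel δ, gW lam δ β ≤ (if h : δ ∈ SS j then (hFex δ h).choose else 0)
    rw [dif_pos h]
    obtain ⟨h1, h2⟩ := (hFex δ h).choose_spec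
    exact ⟨h1, h2⟩
  obtain ⟨ε, hεκ, hWun⟩ := pseudoFodor hl (hSSstat j hjθ) hTsub F (fun δ h => (hF_spec δ h).1)
  -- the transfinite chain
  set pickW : Ordinal → Ordinal := fun y =>
    if h : y < κo lam then (hWun y h).choose else 0 with hpickWdef
  have hpickW : ∀ y < κo lam, pickW y ∈ SS j ∧ F (pickW y) ≤ ε ∧ y < pickW y := by
    intro y h
    show (if h : y < κo lam then (hWun y h).choose else 0) ∈ SS j ∧
      F (if h : y < κo lam then (hWun y h).choose else 0) ≤ ε ∧
      y < (if h : y < κo lam then (hWun y h).choose else 0)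
    rw [dif_pos h]
    obtain ⟨h1, h2, h3⟩ := (hWun y h).choose_spec
    exact ⟨h1, h2, h3⟩
  set dd : Ordinal → Ordinal := Ordinal.lt_wf.fix
    (fun ξ IH => pickW (max ε (Ordinal.bsup ξ (fun η hη => sb (IH η hη))))) with hdddef
  have hddeq : ∀ ξ, dd ξ = pickW (max ε (Ordinal.bsup ξ (fun η _ => sb (dd η)))) := by
    intro ξ
    rw [hdddef]
    exact Ordinal.lt_wf.fix_eq _ ξ
  have hdd : ∀ ξ < κo lam, max ε (Ordinal.bsup ξ (fun η _ => sb (dd η))) < κo lam ∧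
      dd ξ ∈ SS j ∧ F (dd ξ) ≤ ε ∧ max ε (Ordinal.bsup ξ (fun η _ => sb (dd η))) < dd ξ := by
    intro ξ hξ
    induction ξ using Ordinal.induction with
    | _ ξ IH =>
      have hbnd : max ε (Ordinal.bsup ξ (fun η _ => sb (dd η))) < κo lam := by
        apply max_lt hεκ
        apply Ordinal.bsup_lt_ord
        · rw [cof_κo lam hl]
          exact (Cardinal.lt_ord.mp hξ)
        · intro η hη
          have hηκ : η < κo lam := hη.trans hξ
          have hddη : dd η ∈ SS j := (IH η hη hηκ).2.1
          exact (hsb_spec (dd η) (hTsub hddη)).1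
      obtain ⟨h1, h2, h3⟩ := hpickW _ hbnd
      rw [← hddeq] at h1 h2 h3
      exact ⟨hbnd, h1, h2, h3⟩
  have horder : ∀ η ξ, η < ξ → ξ < κo lam → ∀ x ∈ bsel (dd η), x < dd ξ := by
    intro η ξ hηξ hξκ x hx
    have hηκ : η < κo lam := hηξ.trans hξκ
    have hddη : dd η ∈ SS j := (hdd η hηκ).2.1
    calc x ≤ sb (dd η) := (hsb_spec (dd η) (hTsub hddη)).2 x hx
      _ ≤ Ordinal.bsup ξ (fun η _ => sb (dd η)) := Ordinal.le_bsup _ η hηξ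
      _ ≤ max ε (Ordinal.bsup ξ (fun η _ => sb (dd η))) := le_max_right _ _
      _ < dd ξ := (hdd ξ hξκ).2.2.2
  have hddκ : ∀ ξ < κo lam, dd ξ < κo lam := fun ξ hξ => hTsub (hdd ξ hξ).2.1
  have hbselA : ∀ ξ < κo lam, bsel (dd ξ) ∈ A := fun ξ hξ => (hbsel_spec _ (hddκ ξ hξ)).1
  have hbselgt : ∀ ξ < κo lam, ∀ x ∈ bsel (dd ξ), dd ξ < x :=
    fun ξ hξ => (hbsel_spec _ (hddκ ξ hξ)).2
  have hbselne : ∀ ξ < κo lam, (bsel (dd ξ)).Nonempty := fun ξ hξ => hane _ (hbselA ξ hξ)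
  -- pairwise ordering of the selected sets
  have hsep : ∀ η ξ, η < ξ → ξ < κo lam → ∀ x ∈ bsel (dd η), ∀ y ∈ bsel (dd ξ), x < y := by
    intro η ξ hηξ hξκ x hx y hy
    exact (horder η ξ hηξ hξκ x hx).trans (hbselgt ξ hξκ y hy)
  set B : Set (Set Ordinal) := (fun ξ => bsel (dd ξ)) '' (Iio (κo lam)) with hBdef
  have hBsub : B ⊆ A := by
    rintro b ⟨ξ, hξ, rfl⟩
    exact hbselA ξ hξ
  have hInj : Set.InjOn (fun ξ => bsel (dd ξ)) (Iio (κo lam)) := by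
    intro η hη ξ hξ heq
    by_contra hne
    rcases lt_or_gt_of_ne hne with hlt | hgt
    · obtain ⟨x, hx⟩ := hbselne ξ hξ
      have heq' : bsel (dd η) = bsel (dd ξ) := heq
      have h1 : x ∈ bsel (dd η) := by rw [heq']; exact hx
      exact absurd (hsep η ξ hlt hξ x h1 x hx) (lt_irrefl x)
    · obtain ⟨x, hx⟩ := hbselne η hη
      have heq' : bsel (dd η) = bsel (dd ξ) := heq
      have h1 : x ∈ bsel (dd ξ) := by rw [← heq']; exact hx
      exact absurd (hsep ξ η hgt hη x h1 x hx) (lt_irrefl x)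
  have hBcard : Cardinal.mk ↥B = Cardinal.lift.{1,0} (Order.succ lam) := by
    rw [hBdef, Cardinal.mk_image_eq_of_injOn _ _ hInj, hmkκ]
  refine ⟨B, hBsub, hBcard, ?_⟩
  rintro a ⟨η, hη, rfl⟩ b ⟨ξ, hξ, rfl⟩ hab α hα β hβ
  -- establish η < ξ
  have hηξ : η < ξ := by
    rcases lt_trichotomy η ξ with h | h | h
    · exact h
    · exfalso
      subst h
      obtain ⟨x, hx⟩ := hbselne η hη
      exact absurd (hab x hx x hx) (lt_irrefl x)
    · exfalso
      obtain ⟨x, hx⟩ := hbselne η hη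
      obtain ⟨y, hy⟩ := hbselne ξ hξ
      exact absurd ((hab x hx y hy).trans (hsep ξ η h hη y hy x hx)) (lt_irrefl x)
  -- the walk from β passes through δ := dd ξ
  have hδSS : dd ξ ∈ SS j := (hdd ξ hξ).2.1
  obtain ⟨hδcof, _, hδκ, _⟩ := hδSS
  have hδβ : dd ξ < β := hbselgt ξ hξ β hβ
  have hβκ : β < κo lam := ((hAmem _ (hbselA ξ hξ)).1 hβ)
  have hgWα : gW lam (dd ξ) β < α := by
    have h1 : gW lam (dd ξ) β ≤ F (dd ξ) := (hF_spec _ (hdd ξ hξ).2.1).2 β hβ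
    have h2 : F (dd ξ) ≤ ε := (hdd ξ hξ).2.2.1
    have h3 : ε < dd η := (le_max_left _ _).trans_lt (hdd η (hη)).2.2.2
    have h4 : dd η < α := hbselgt η hη α hα
    exact ((h1.trans h2).trans_lt h3).trans h4
  have hαδ : α < dd ξ := horder η ξ hηξ hξ α hα
  have hwalk : dd ξ ∈ wlk lam α β := (gW_spec hl hδcof hδβ.le hβκ).2 α hgWα hαδ
  -- conclude via the label of `dd ξ`
  have hLδ : L (dd ξ) = j := hLeq j hjθ _ (hdd ξ hξ).2.1
  have hmemim : j ∈ L '' (wlk lam α β ∩ SSu) := by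
    refine ⟨dd ξ, ⟨hwalk, ⟨j, hjθ, (hdd ξ hξ).2.1⟩⟩, hLδ⟩
  have hle : j ≤ cfun α β := by
    apply le_csSup ((himfin α β).bddAbove) hmemim
  exact hij.trans_le hle

end P16

theorem stmt16 (lam θ : Cardinal)
    (hlam : lam.IsRegular) (hθreg : θ.IsRegular) (hθlam : θ ≤ lam) :
    U (Order.succ lam) (Order.succ lam) θ lam := by
  obtain ⟨c, hcol, hmain⟩ := P16.main hlam.aleph0_le hlam θ hθreg hθlam
  refine ⟨c, fun α β _ _ => hcol α β, ?_⟩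
  intro χ' hχ' A hA i hi
  obtain ⟨hmem, hdisj, hcard⟩ := hA
  obtain ⟨B, hBsub, hBcard, hB⟩ := hmain χ' hχ' A hmem hdisj hcard i hi
  exact ⟨B, hBsub, hBcard, fun a ha b hb hab => hB a ha b hb hab⟩
end
end

section
/- Suppose that λ is a singular cardinal. Then there exists a closed witness to U(λ⁺, λ⁺, cf(λ), λ). -/
open Cardinal Set Ordinal

noncomputable section

lemma sm_bdd {o : Ordinal.{0}} {s : Set Ordinal.{0}} (hs : ∀ x ∈ s, x < o)
    (h : Cardinal.mk s < Cardinal.lift.{1,0} o.cof) : ∃ b, b < o ∧ ∀ x ∈ s, x ≤ b := by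
  rcases Set.eq_empty_or_nonempty s with rfl | ⟨x0, hx0⟩
  · refine ⟨0, ?_, by simp⟩
    rcases eq_zero_or_pos o with rfl | h0
    · simp [Ordinal.cof_zero] at h
    · exact h0
  · obtain ⟨d, hd, hdc⟩ : ∃ d : Cardinal.{0}, Cardinal.mk s = Cardinal.lift.{1,0} d ∧ d < o.cof := by
      obtain ⟨d, hd⟩ := Cardinal.mem_range_lift_of_le h.le
      refine ⟨d, hd.symm, ?_⟩
      rwa [← hd, Cardinal.lift_lt] at h
    have hmk : Cardinal.lift.{0,1} (Cardinal.mk s) = Cardinal.lift.{1,0} (Cardinal.mk d.out) := by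
      rw [Cardinal.lift_id'.{0,1}]
      rwa [Cardinal.mk_out]
    obtain ⟨e⟩ := Cardinal.lift_mk_eq'.mp hmk
    set f : d.out → Ordinal.{0} := fun x => (e.symm x : Ordinal) with hf
    have hub : iSup f < o := by
      apply Ordinal.iSup_lt_ord
      · rwa [Cardinal.mk_out]
      · intro i
        exact hs _ (e.symm i).2
    refine ⟨iSup f, hub, fun x hx => ?_⟩
    have : x = f (e ⟨x, hx⟩) := by simp [hf]
    rw [this]
    exact Ordinal.le_iSup f _

lemma mk_Iic_lt {κ : Cardinal.{0}} (hκ : ℵ₀ ≤ κ) {b : Ordinal.{0}} (hb : b < κ.ord) :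
    Cardinal.mk (Set.Iic b) < Cardinal.lift.{1,0} κ := by
  have h1 : Set.Iic b = Set.Iio (b + 1) := by
    ext x; rw [Ordinal.add_one_eq_succ]; simp [Order.lt_succ_iff]
  rw [h1, Ordinal.mk_Iio_ordinal, Cardinal.lift_lt, ← Cardinal.lt_ord, Ordinal.add_one_eq_succ]
  exact (Cardinal.isSuccLimit_ord hκ).succ_lt hb

lemma fodor_lite (κ : Cardinal.{0}) (hκ : ℵ₀ ≤ κ) (hreg : κ.ord.cof = κ)
    (M : Set Ordinal.{0}) (hM : ∀ x ∈ M, x < κ.ord)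
    (hMc : Cardinal.mk M = Cardinal.lift.{1,0} κ)
    (F : Ordinal → Set Ordinal) (hFsub : ∀ η ∈ M, ∀ ζ ∈ F η, ζ ∈ M ∧ ζ < η)
    (ν : Cardinal.{0}) (hν : ℵ₀ ≤ ν) (hνκ : Order.succ ν < κ)
    (hFc : ∀ η ∈ M, Cardinal.mk (F η) ≤ Cardinal.lift.{1,0} ν) :
    ∃ β, β < κ.ord ∧
      Cardinal.mk {η | η ∈ M ∧ F η ⊆ Set.Iic β} = Cardinal.lift.{1,0} κ := by
  classical
  set K := κ.ord with hK
  have hKcof : K.cof = κ := hreg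
  have hKlim : Order.IsSuccLimit K := Cardinal.isSuccLimit_ord hκ
  have succlt : ∀ {a : Ordinal}, a < K → a + 1 < K := fun {a} h => by
    rw [Ordinal.add_one_eq_succ]; exact hKlim.succ_lt h
  have ltsucc : ∀ a : Ordinal.{0}, a < a + 1 := fun a => by
    rw [Ordinal.add_one_eq_succ]; exact Order.lt_succ a
  -- M is unbounded
  have hMub : ∀ x, x < K → (M ∩ Set.Ioi x).Nonempty := by
    intro x hx
    by_contra hemp
    rw [Set.not_nonempty_iff_eq_empty] at hemp
    have hsub : M ⊆ Set.Iic x := by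
      intro y hy
      by_contra hxy
      exact absurd (Set.eq_empty_iff_forall_notMem.mp hemp y ⟨hy, (lt_of_not_ge hxy : x < y)⟩) (by simp)
    have := (Cardinal.mk_le_mk_of_subset hsub).trans_lt (mk_Iic_lt hκ hx)
    rw [hMc] at this; exact lt_irrefl _ this
  by_contra hcon
  push_neg at hcon
  set Y : Ordinal → Set Ordinal := fun β => {η | η ∈ M ∧ F η ⊆ Set.Iic β} with hY
  have hYlt : ∀ β, β < K → Cardinal.mk (Y β) < Cardinal.lift.{1,0} κ := by
    intro β hβ
    rcases lt_or_eq_of_le (Cardinal.mk_le_mk_of_subset (fun η (hη : η ∈ Y β) => hη.1)) with h | h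
    · exact h.trans_le hMc.le
    · exact absurd (h.trans hMc) (hcon β hβ)
  -- the bounding function g
  have hgex : ∀ β, β < K → ∃ b, b < K ∧ ∀ x ∈ Y β, x < b := by
    intro β hβ
    obtain ⟨b, hbK, hb⟩ := sm_bdd (s := Y β) (fun x hx => hM x hx.1)
      (by rw [hKcof]; exact hYlt β hβ)
    exact ⟨b + 1, succlt hbK, fun x hx => (hb x hx).trans_lt (ltsucc b)⟩
  set g : Ordinal → Ordinal := fun β => if h : β < K then (hgex β h).choose else 0 with hg
  have hgK : ∀ β, β < K → g β < K := by
    intro β h; rw [hg]; simp only [dif_pos h]; exact (hgex β h).choose_spec.1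
  have hgY : ∀ β, β < K → ∀ x ∈ Y β, x < g β := by
    intro β h; rw [hg]; simp only [dif_pos h]; exact (hgex β h).choose_spec.2
  -- the closure function h
  set h : Ordinal → Ordinal := fun β => max (sSup (g '' Set.Iic β)) (β + 1) with hh
  have hbddg : ∀ β, β < K → ∃ b, b < K ∧ ∀ x ∈ g '' Set.Iic β, x ≤ b := by
    intro β hβ
    apply sm_bdd (s := g '' Set.Iic β)
    · rintro x ⟨β', hβ', rfl⟩
      exact hgK β' (lt_of_le_of_lt hβ' hβ)
    · rw [hKcof]
      exact (Cardinal.mk_image_le).trans_lt (mk_Iic_lt hκ hβ)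
  have hhK : ∀ β, β < K → h β < K := by
    intro β hβ
    obtain ⟨b, hbK, hb⟩ := hbddg β hβ
    rw [hh]
    apply max_lt _ (succlt hβ)
    exact lt_of_le_of_lt (csSup_le ⟨g β, ⟨β, Set.self_mem_Iic, rfl⟩⟩ hb) hbK
  have hhgt : ∀ β, β < h β := fun β => lt_of_lt_of_le (ltsucc β) (le_max_right _ _)
  have hhg : ∀ β, β < K → ∀ β', β' ≤ β → g β' ≤ h β := by
    intro β hβ β' hβ'
    obtain ⟨b, hbK, hb⟩ := hbddg β hβ
    exact le_trans (le_csSup ⟨b, fun x hx => hb x hx⟩ ⟨β', Set.mem_Iic.mpr hβ', rfl⟩)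
      (le_max_left _ _)
  -- the iteration d
  set L := (Order.succ ν).ord with hL
  have hνinf : ℵ₀ ≤ Order.succ ν := hν.trans (Order.le_succ ν)
  have hLK : L < K := Cardinal.ord_lt_ord.mpr hνκ
  have hLlim : Order.IsSuccLimit L := Cardinal.isSuccLimit_ord hνinf
  have hLcof : L.cof = Order.succ ν := (Cardinal.isRegular_succ hν).cof_eq
  set d : Ordinal.{0} → Ordinal.{0} := fun σ => Ordinal.limitRecOn σ 0
    (fun _ x => sInf (M ∩ Set.Ioi (h x)))
    (fun σ' _ ih => sSup {x | ∃ ρ, ∃ hρ : ρ < σ', ih ρ hρ = x}) with hd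
  have hd0 : d 0 = 0 := Ordinal.limitRecOn_zero _ _ _
  have hdsucc : ∀ σ, d (Order.succ σ) = sInf (M ∩ Set.Ioi (h (d σ))) := fun σ =>
    Ordinal.limitRecOn_succ _ _ _ _
  have hdlim : ∀ σ, Order.IsSuccLimit σ → d σ = sSup {x | ∃ ρ, ∃ _ : ρ < σ, d ρ = x} := fun σ hσ =>
    Ordinal.limitRecOn_limit _ _ _ _ hσ
  
  -- main induction on d
  have hmain : ∀ σ, σ ≤ L → (d σ < K ∧ ∀ ρ, ρ < σ → d ρ < d σ) := by
    intro σ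
    induction σ using Ordinal.induction with
    | _ σ IH =>
      intro hσL
      rcases Ordinal.zero_or_succ_or_isSuccLimit σ with rfl | ⟨ρ0, rfl⟩ | hlim
      · rw [hd0]
        exact ⟨hKlim.pos, fun ρ hρ => absurd hρ (not_lt_of_ge (zero_le (a := ρ)))⟩
      · have hρ0σ : ρ0 < Order.succ ρ0 := Order.lt_succ ρ0
        obtain ⟨hρ0K, hρ0mono⟩ := IH ρ0 hρ0σ (le_of_lt (lt_of_lt_of_le hρ0σ hσL))
        have hne := hMub (h (d ρ0)) (hhK _ hρ0K)
        have hmem : d (Order.succ ρ0) ∈ M ∩ Set.Ioi (h (d ρ0)) := by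
          rw [hdsucc]; exact csInf_mem hne
        constructor
        · exact hM _ hmem.1
        · intro ρ hρ
          have h1 : d ρ0 < d (Order.succ ρ0) := lt_trans (hhgt (d ρ0)) hmem.2
          rcases lt_or_eq_of_le (Order.lt_succ_iff.mp hρ) with h2 | h2
          · exact lt_trans (hρ0mono ρ h2) h1
          · rw [h2]; exact h1
      · have hS : {x | ∃ ρ, ∃ _ : ρ < σ, d ρ = x}.Nonempty := ⟨d 0, 0, hlim.pos, rfl⟩
        have hSK : ∀ x ∈ {x | ∃ ρ, ∃ _ : ρ < σ, d ρ = x}, x < K := by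
          rintro x ⟨ρ, hρ, rfl⟩
          exact (IH ρ hρ (le_of_lt (lt_of_lt_of_le hρ hσL))).1
        have hbddS : BddAbove {x | ∃ ρ, ∃ _ : ρ < σ, d ρ = x} :=
          ⟨K, fun x hx => (hSK x hx).le⟩
        have hcard : Cardinal.mk {x | ∃ ρ, ∃ _ : ρ < σ, d ρ = x} <
            Cardinal.lift.{1,0} K.cof := by
          have he : {x | ∃ ρ, ∃ _ : ρ < σ, d ρ = x} =
              Set.range (fun ρ : Set.Iio σ => d ρ) := by
            ext x
            constructor
            · rintro ⟨ρ, hρ, rfl⟩; exact ⟨⟨ρ, hρ⟩, rfl⟩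
            · rintro ⟨⟨ρ, hρ⟩, rfl⟩; exact ⟨ρ, hρ, rfl⟩
          rw [he, hKcof]
          refine lt_of_le_of_lt Cardinal.mk_range_le ?_
          rw [Ordinal.mk_Iio_ordinal, Cardinal.lift_lt, ← Cardinal.lt_ord]
          exact lt_of_le_of_lt hσL hLK
        obtain ⟨b, hbK, hb⟩ := sm_bdd hSK hcard
        rw [hdlim σ hlim]
        constructor
        · exact lt_of_le_of_lt (csSup_le hS hb) hbK
        · intro ρ hρ
          have hρ1 : Order.succ ρ < σ := hlim.succ_lt hρ
          have h1 : d ρ < d (Order.succ ρ) :=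
            (IH _ hρ1 (le_of_lt (lt_of_lt_of_le hρ1 hσL))).2 ρ (Order.lt_succ ρ)
          exact lt_of_lt_of_le h1 (le_csSup hbddS ⟨Order.succ ρ, hρ1, rfl⟩)
  have hξK : d L < K := (hmain L le_rfl).1
  have hξeq : d L = sSup {x | ∃ ρ, ∃ _ : ρ < L, d ρ = x} := hdlim L hLlim
  have hSLne : {x | ∃ ρ, ∃ _ : ρ < L, d ρ = x}.Nonempty := ⟨d 0, 0, hLlim.pos, rfl⟩
  have hexρ : ∀ β, β < d L → ∃ ρ, ρ < L ∧ β < d ρ := by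
    intro β hβ
    by_contra hno
    push_neg at hno
    have hub : sSup {x | ∃ ρ, ∃ _ : ρ < L, d ρ = x} ≤ β := by
      apply csSup_le hSLne
      rintro x ⟨ρ, hρ, rfl⟩
      exact hno ρ hρ
    rw [← hξeq] at hub
    exact absurd hβ (not_lt.mpr hub)
  have hsucclt : ∀ ρ, ρ < L → h (d ρ) < d (Order.succ ρ) := by
    intro ρ hρ
    have hρK : d ρ < K := (hmain ρ (le_of_lt hρ)).1
    have hmem : d (Order.succ ρ) ∈ M ∩ Set.Ioi (h (d ρ)) := by
      rw [hdsucc]; exact csInf_mem (hMub _ (hhK _ hρK))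
    exact hmem.2
  have hclo : ∀ β, β < d L → g β < d L := by
    intro β hβ
    obtain ⟨ρ, hρL, hβρ⟩ := hexρ β hβ
    have h1 : g β ≤ h (d ρ) := hhg (d ρ) (hmain ρ (le_of_lt hρL)).1 β (le_of_lt hβρ)
    exact lt_of_le_of_lt (lt_of_le_of_lt h1 (hsucclt ρ hρL)).le
      (lt_of_le_of_lt (le_refl _) ((hmain L le_rfl).2 _ (hLlim.succ_lt hρL)))
  have hFbdd : ∀ s : Set Ordinal.{0}, (∀ x ∈ s, x < d L) →
      Cardinal.mk s ≤ Cardinal.lift.{1,0} ν → ∃ β, β < d L ∧ ∀ x ∈ s, x ≤ β := by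
    intro s hsub hcard
    set q : Ordinal → Ordinal := fun x => sInf {ρ | ρ < L ∧ x < d ρ} with hq
    have hqs : ∀ x ∈ s, q x < L ∧ x < d (q x) := by
      intro x hx
      obtain ⟨ρ, hρ, hρ2⟩ := hexρ x (hsub x hx)
      exact csInf_mem (⟨ρ, hρ, hρ2⟩ : {ρ | ρ < L ∧ x < d ρ}.Nonempty)
    have himg : ∀ y ∈ q '' s, y < L := by
      rintro y ⟨x, hx, rfl⟩; exact (hqs x hx).1
    have hcards : Cardinal.mk (q '' s) < Cardinal.lift.{1,0} L.cof := by
      rw [hLcof]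
      exact lt_of_le_of_lt (Cardinal.mk_image_le.trans hcard)
        (Cardinal.lift_lt.mpr (Order.lt_succ ν))
    obtain ⟨r, hrL, hr⟩ := sm_bdd himg hcards
    refine ⟨d r, (hmain L le_rfl).2 r hrL, fun x hx => ?_⟩
    rcases lt_or_eq_of_le (hr (q x) ⟨x, hx, rfl⟩) with h1 | h1
    · exact le_of_lt (lt_trans (hqs x hx).2 ((hmain r (le_of_lt hrL)).2 _ h1))
    · rw [← h1]; exact le_of_lt (hqs x hx).2
  obtain ⟨η, hηM, hξη, hζξ⟩ : ∃ η, η ∈ M ∧ d L ≤ η ∧ ∀ ζ ∈ M, ζ < η → ζ < d L := by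
    by_cases hξM : d L ∈ M
    · exact ⟨d L, hξM, le_rfl, fun ζ _ hζ => hζ⟩
    · have hmem := csInf_mem (hMub (d L) hξK)
      refine ⟨sInf (M ∩ Set.Ioi (d L)), hmem.1, le_of_lt hmem.2, ?_⟩
      intro ζ hζM hζlt
      by_contra hge
      push_neg at hge
      rcases lt_or_eq_of_le hge with h1 | h1
      · exact absurd hζlt (not_lt.mpr (csInf_le (OrderBot.bddBelow _) ⟨hζM, h1⟩))
      · rw [h1] at hξM; exact hξM hζM
  have hFξ : ∀ ζ ∈ F η, ζ < d L := fun ζ hζ =>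
    hζξ ζ (hFsub η hηM ζ hζ).1 (hFsub η hηM ζ hζ).2
  obtain ⟨r, hrξ, hr⟩ := hFbdd (F η) hFξ (hFc η hηM)
  have hrK : r < K := lt_trans hrξ hξK
  have hηY : η ∈ Y r := ⟨hηM, fun ζ hζ => Set.mem_Iic.mpr (hr ζ hζ)⟩
  have h1 : η < g r := hgY r hrK η hηY
  have h2 : g r < d L := hclo r hrξ
  exact absurd (lt_of_lt_of_le (lt_trans h1 h2) hξη) (lt_irrefl η)

/-- level-`i` approximation set -/
def Xs (E : Ordinal.{0} → Ordinal.{0} → Ordinal.{0}) (p : Ordinal.{0} → Ordinal.{0})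
    (i β : Ordinal.{0}) : Set Ordinal.{0} :=
  {α | α < β ∧ E β α ≤ p i}

/-- closure of `Xs` under accumulation points below `β` -/
def Ds (E : Ordinal.{0} → Ordinal.{0} → Ordinal.{0}) (p : Ordinal.{0} → Ordinal.{0})
    (i β : Ordinal.{0}) : Set Ordinal.{0} :=
  Xs E p i β ∪ {δ | δ < β ∧ 0 < δ ∧ ∀ x < δ, ∃ y ∈ Xs E p i β, x < y ∧ y < δ}

lemma Ds_subset_Iio {E p : Ordinal.{0} → Ordinal.{0} → Ordinal.{0}} : True := trivial

lemma Ds_lt {E : Ordinal.{0} → Ordinal.{0} → Ordinal.{0}} {p : Ordinal.{0} → Ordinal.{0}}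
    {i β α : Ordinal.{0}} (h : α ∈ Ds E p i β) : α < β := by
  rcases h with h | h
  · exact h.1
  · exact h.1

lemma Ds_mono {E : Ordinal.{0} → Ordinal.{0} → Ordinal.{0}} {p : Ordinal.{0} → Ordinal.{0}}
    {i j β : Ordinal.{0}} (hp : p i ≤ p j) : Ds E p i β ⊆ Ds E p j β := by
  have hX : Xs E p i β ⊆ Xs E p j β := fun α hα => ⟨hα.1, hα.2.trans hp⟩
  rintro α (hα | hα)
  · exact Or.inl (hX hα)
  · refine Or.inr ⟨hα.1, hα.2.1, fun x hx => ?_⟩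
    obtain ⟨y, hy, hxy, hyδ⟩ := hα.2.2 x hx
    exact ⟨y, hX hy, hxy, hyδ⟩

lemma Ds_closed {E : Ordinal.{0} → Ordinal.{0} → Ordinal.{0}} {p : Ordinal.{0} → Ordinal.{0}}
    {i β δ : Ordinal.{0}} (hδβ : δ < β) (hδ0 : 0 < δ)
    (hacc : ∀ x < δ, ∃ α, x < α ∧ α < δ ∧ α ∈ Ds E p i β) : δ ∈ Ds E p i β := by
  refine Or.inr ⟨hδβ, hδ0, fun x hx => ?_⟩
  obtain ⟨α, hxα, hαδ, hα⟩ := hacc x hx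
  rcases hα with hα | hα
  · exact ⟨α, hα, hxα, hαδ⟩
  · obtain ⟨y, hy, hxy, hyα⟩ := hα.2.2 x hxα
    exact ⟨y, hy, hxy, lt_trans hyα hαδ⟩

lemma Ds_card {E : Ordinal.{0} → Ordinal.{0} → Ordinal.{0}} {p : Ordinal.{0} → Ordinal.{0}}
    {i β : Ordinal.{0}} (hinj : Set.InjOn (E β) (Set.Iio β)) :
    Cardinal.mk (Ds E p i β) ≤ Cardinal.lift.{1,0} ((p i).card + ℵ₀) := by
  classical
  set m : Cardinal.{1} := Cardinal.lift.{1,0} ((p i).card + ℵ₀) with hm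
  have hminf : ℵ₀ ≤ m := by
    rw [hm, ← Cardinal.lift_aleph0.{1,0}, Cardinal.lift_le]
    exact le_add_self
  set X := Xs E p i β with hX
  have hXcard : Cardinal.mk X ≤ m := by
    have h1 : Cardinal.mk X = Cardinal.mk (E β '' X) :=
      (Cardinal.mk_image_eq_of_injOn _ _ (hinj.mono (fun α (hα : α ∈ X) => hα.1))).symm
    have h2 : E β '' X ⊆ Set.Iic (p i) := by
      rintro x ⟨α, hα, rfl⟩; exact hα.2
    have h3 : Cardinal.mk (Set.Iic (p i)) = Cardinal.lift.{1,0} ((p i).card + 1) := by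
      have h4 : Set.Iic (p i) = Set.Iio (p i + 1) := by
        ext x; rw [Ordinal.add_one_eq_succ]; simp [Order.lt_succ_iff]
      rw [h4, Ordinal.mk_Iio_ordinal, Ordinal.card_add, Ordinal.card_one]
    calc Cardinal.mk X = Cardinal.mk (E β '' X) := h1
      _ ≤ Cardinal.mk (Set.Iic (p i)) := Cardinal.mk_le_mk_of_subset h2
      _ = Cardinal.lift.{1,0} ((p i).card + 1) := h3
      _ ≤ m := by
        rw [hm, Cardinal.lift_le]
        exact add_le_add_right Cardinal.one_le_aleph0 _
  set A : Set Ordinal.{0} := {δ | δ < β ∧ 0 < δ ∧ ∀ x < δ, ∃ y ∈ Xs E p i β, x < y ∧ y < δ}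
    with hA
  have hAcard : Cardinal.mk A ≤ Cardinal.mk X + 1 := by
    set f : A → (↥X ⊕ PUnit.{2}) := fun δ =>
      if h : {y | y ∈ X ∧ (δ : Ordinal) ≤ y}.Nonempty then
        Sum.inl ⟨sInf {y | y ∈ X ∧ (δ : Ordinal) ≤ y}, (csInf_mem h).1⟩
      else Sum.inr ⟨⟩ with hfdef
    have key : ∀ δ₁ δ₂ : A, (δ₁ : Ordinal) < (δ₂ : Ordinal) →
        ∃ y ∈ X, (δ₁ : Ordinal) < y ∧ y < (δ₂ : Ordinal) := by
      intro δ₁ δ₂ hlt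
      exact δ₂.2.2.2 _ hlt
    have asym : ∀ δ₁ δ₂ : A, (δ₁ : Ordinal) < (δ₂ : Ordinal) → f δ₁ ≠ f δ₂ := by
      intro δ₁ δ₂ hlt heq
      obtain ⟨y, hyX, hy1, hy2⟩ := key _ _ hlt
      have hS1 : {y | y ∈ X ∧ (δ₁ : Ordinal) ≤ y}.Nonempty := ⟨y, hyX, hy1.le⟩
      rw [hfdef] at heq
      simp only [dif_pos hS1] at heq
      by_cases hS2 : {y | y ∈ X ∧ (δ₂ : Ordinal) ≤ y}.Nonempty
      · simp only [dif_pos hS2] at heq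
        have h1 : sInf {y | y ∈ X ∧ (δ₁ : Ordinal) ≤ y} < (δ₂ : Ordinal) :=
          lt_of_le_of_lt (csInf_le (OrderBot.bddBelow _) ⟨hyX, hy1.le⟩) hy2
        have h2 : (δ₂ : Ordinal) ≤ sInf {y | y ∈ X ∧ (δ₂ : Ordinal) ≤ y} :=
          (csInf_mem hS2).2
        have h3 := Sum.inl.inj heq
        rw [Subtype.ext_iff] at h3
        simp only at h3
        rw [h3] at h1
        exact absurd (lt_of_lt_of_le h1 h2) (lt_irrefl _)
      · simp only [dif_neg hS2] at heq
        exact Sum.inl_ne_inr heq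
    have hfinj : Function.Injective f := by
      intro δ₁ δ₂ heq
      by_contra hne
      have hne' : (δ₁ : Ordinal) ≠ (δ₂ : Ordinal) := fun h => hne (Subtype.ext h)
      rcases lt_or_gt_of_ne hne' with hlt | hlt
      · exact asym δ₁ δ₂ hlt heq
      · exact asym δ₂ δ₁ hlt heq.symm
    calc Cardinal.mk A ≤ Cardinal.mk (↥X ⊕ PUnit.{2}) := Cardinal.mk_le_of_injective hfinj
      _ = Cardinal.mk X + 1 := by simp
  have hsum : Cardinal.mk (Ds E p i β) ≤ Cardinal.mk X + Cardinal.mk A :=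
    Cardinal.mk_union_le _ _
  calc Cardinal.mk (Ds E p i β) ≤ Cardinal.mk X + Cardinal.mk A := hsum
    _ ≤ m + (m + 1) := add_le_add hXcard (hAcard.trans (add_le_add_left hXcard 1))
    _ ≤ m + (m + m) := by
      exact add_le_add_right (add_le_add_right (Cardinal.one_le_aleph0.trans hminf) m) m
    _ = m := by
      rw [Cardinal.add_eq_self hminf, Cardinal.add_eq_self hminf]

theorem stmt17 (lam : Cardinal) (hinf : ℵ₀ ≤ lam) (hsing : lam.ord.cof < lam) :
    ∃ c, ClosedColoring (Order.succ lam) lam.ord.cof c ∧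
      WitnessU (Order.succ lam) (Order.succ lam) lam.ord.cof lam c := by
  classical
  have hκinf : ℵ₀ ≤ Order.succ lam := hinf.trans (Order.le_succ lam)
  set κ : Cardinal := Order.succ lam with hκdef
  set K : Ordinal := κ.ord with hKdef
  set θo : Ordinal := lam.ord.cof.ord with hθdef
  have hreg : K.cof = κ := (Cardinal.isRegular_succ hinf).cof_eq
  have hKlim : Order.IsSuccLimit K := Cardinal.isSuccLimit_ord hκinf
  have hlamlim : Order.IsSuccLimit lam.ord := Cardinal.isSuccLimit_ord hinf
  have hcofinf : ℵ₀ ≤ lam.ord.cof := Ordinal.aleph0_le_cof.mpr hlamlim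
  have haleph0lam : ℵ₀ < lam := lt_of_le_of_lt hcofinf hsing
  -- fundamental sequence for lam.ord
  obtain ⟨f, hf⟩ := Ordinal.exists_fundamental_sequence lam.ord
  set p : Ordinal → Ordinal := fun i => if h : i < θo then f i h else 0 with hp
  have hplt : ∀ i, i < θo → p i < lam.ord := by
    intro i h
    rw [hp]; simp only [dif_pos h]
    exact hf.lt h
  have hpmono : ∀ i j, i ≤ j → j < θo → p i ≤ p j := by
    intro i j hij hj
    have hi : i < θo := lt_of_le_of_lt hij hj
    rw [hp]; simp only [dif_pos hi, dif_pos hj]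
    exact hf.monotone hi hj hij
  have hpcof : ∀ x, x < lam.ord → ∃ i, i < θo ∧ x ≤ p i := by
    intro x hx
    have h1 : x < Ordinal.blsub θo f := by rw [hf.2.2]; exact hx
    obtain ⟨i, hi, hle⟩ := Ordinal.lt_blsub_iff.mp h1
    refine ⟨i, hi, ?_⟩
    rw [hp]; simp only [dif_pos hi]; exact hle
  -- the injections E
  have hEex : ∀ β : Ordinal, ∃ Eb : Ordinal → Ordinal, β < K →
      (∀ α, α < β → Eb α < lam.ord) ∧ Set.InjOn Eb (Set.Iio β) := by
    intro β
    by_cases hβ : β < K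
    · have hcard : β.card ≤ lam := by
        rw [hKdef, hκdef, Cardinal.lt_ord, Order.lt_succ_iff] at hβ
        exact hβ
      have h1 : Cardinal.mk (Set.Iio β) ≤ Cardinal.mk (Set.Iio lam.ord) := by
        rw [Ordinal.mk_Iio_ordinal, Ordinal.mk_Iio_ordinal, Cardinal.lift_le,
          Cardinal.card_ord]
        exact hcard
      obtain ⟨g⟩ := (Cardinal.le_def _ _).mp h1
      refine ⟨fun α => if h : α < β then (g ⟨α, h⟩ : Set.Iio lam.ord).1 else 0,
        fun _ => ⟨?_, ?_⟩⟩
      · intro α hα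
        simp only [dif_pos hα]
        exact (g ⟨α, hα⟩).2
      · intro a ha b hb heq
        simp only [Set.mem_Iio] at ha hb
        simp only [dif_pos ha, dif_pos hb] at heq
        have := g.injective (Subtype.ext heq)
        exact Subtype.ext_iff.mp this
    · exact ⟨fun _ => 0, fun h => absurd h hβ⟩
  set E : Ordinal → Ordinal → Ordinal := fun β => (hEex β).choose with hEdef
  have hE1 : ∀ β, β < K → ∀ α, α < β → E β α < lam.ord := fun β h =>
    ((hEex β).choose_spec h).1
  have hE2 : ∀ β, β < K → Set.InjOn (E β) (Set.Iio β) := fun β h =>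
    ((hEex β).choose_spec h).2
  -- the coloring
  set c : Ordinal → Ordinal → Ordinal := fun α β =>
    if α < β ∧ β < K then sInf {i | i < θo ∧ α ∈ Ds E p i β} else 0 with hc
  have hcov : ∀ α β, α < β → β < K → {i | i < θo ∧ α ∈ Ds E p i β}.Nonempty := by
    intro α β hαβ hβ
    obtain ⟨i, hi, hle⟩ := hpcof (E β α) (hE1 β hβ α hαβ)
    exact ⟨i, hi, Or.inl ⟨hαβ, hle⟩⟩
  have hcval : ∀ α β, α < β → β < K → c α β < θo ∧ α ∈ Ds E p (c α β) β := by
    intro α β hαβ hβ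
    have h1 := csInf_mem (hcov α β hαβ hβ)
    rw [hc]
    simp only [if_pos (And.intro hαβ hβ)]
    exact h1
  have hcle : ∀ α β i, α < β → β < K → i < θo → (c α β ≤ i ↔ α ∈ Ds E p i β) := by
    intro α β i hαβ hβ hi
    constructor
    · intro hle
      exact Ds_mono (hpmono _ _ hle hi) (hcval α β hαβ hβ).2
    · intro hmem
      have h2 := csInf_le (OrderBot.bddBelow _)
        (Set.mem_setOf.mpr (And.intro hi hmem) : i ∈ {i | i < θo ∧ α ∈ Ds E p i β})
      rw [hc]
      simpa only [if_pos (And.intro hαβ hβ)] using h2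
  refine ⟨c, ?_, ?_, ?_⟩
  · -- ClosedColoring
    intro β hβ i hi γ hγβ hγ0 hyp
    rcases lt_or_eq_of_le hi with hilt | hieq
    · refine (hcle γ β i hγβ hβ hilt).mpr (Ds_closed hγβ hγ0 ?_)
      intro x hx
      obtain ⟨α, h1, h2, h3⟩ := hyp x hx
      exact ⟨α, h1, h2, (hcle α β i (lt_trans h2 hγβ) hβ hilt).mp h3⟩
    · rw [hieq]
      exact le_of_lt (hcval γ β hγβ hβ).1
  · -- IsColoring
    intro α β h1 h2
    exact (hcval α β h1 h2).1
  · -- main clause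
    intro χ' hχ' A hA i hiθ
    obtain ⟨hA1, hA2, hA3⟩ := hA
    -- blocks are nonempty
    have hχ0 : χ' ≠ 0 := by
      intro h0
      have hempty : ∀ a ∈ A, a = ∅ := by
        intro a ha
        have := (hA1 a ha).2
        rw [HasCard, h0, Cardinal.lift_zero, Cardinal.mk_eq_zero_iff] at this
        exact Set.isEmpty_coe_sort.mp this
      have hsub : A.Subsingleton := by
        intro a ha b hb
        rw [hempty a ha, hempty b hb]
      have h1 : Cardinal.lift.{1,0} κ ≤ 1 := by
        rw [← hA3]; exact hsub.cardinalMk_le_one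
      have h2 : (ℵ₀ : Cardinal.{1}) ≤ 1 := by
        calc (ℵ₀ : Cardinal.{1}) = Cardinal.lift.{1,0} ℵ₀ := Cardinal.lift_aleph0.{1,0}.symm
          _ ≤ Cardinal.lift.{1,0} κ := Cardinal.lift_le.mpr hκinf
          _ ≤ 1 := h1
      exact absurd h2 (not_le.mpr Cardinal.one_lt_aleph0)
    have hane : ∀ a ∈ A, a.Nonempty := by
      intro a ha
      have := (hA1 a ha).2
      rw [HasCard] at this
      rw [← Set.nonempty_coe_sort, ← Cardinal.mk_ne_zero_iff, this]
      simp [hχ0]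
    have hmininj : Set.InjOn sInf A := by
      intro a ha b hb heq
      by_contra hne
      have h1 : sInf a ∈ a := csInf_mem (hane a ha)
      have h2 : sInf a ∈ b := heq ▸ csInf_mem (hane b hb)
      exact Set.disjoint_left.mp (hA2 ha hb hne) h1 h2
    set M : Set Ordinal := sInf '' A with hMdef
    have hMsub : ∀ x ∈ M, x < K := by
      rintro x ⟨a, ha, rfl⟩
      exact (hA1 a ha).1 (csInf_mem (hane a ha))
    have hMcard : Cardinal.mk M = Cardinal.lift.{1,0} κ := by
      rw [hMdef, Cardinal.mk_image_eq_of_injOn _ _ hmininj]; exact hA3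
    set bl : Ordinal → Set Ordinal := fun η => ⋃₀ {a | a ∈ A ∧ sInf a = η} with hbldef
    have hblA : ∀ a ∈ A, bl (sInf a) = a := by
      intro a ha
      apply Set.eq_of_subset_of_subset
      · rintro x ⟨b, ⟨hbA, hbeq⟩, hxb⟩
        rwa [hmininj hbA ha hbeq] at hxb
      · intro x hx
        exact ⟨a, ⟨ha, rfl⟩, hx⟩
    set S : Ordinal → Set Ordinal := fun η => (⋃ β' ∈ bl η, Ds E p i β') ∩ Set.Iio η
      with hSdef
    set F : Ordinal → Set Ordinal := fun η => {ζ | ζ ∈ M ∧ ζ < η ∧ (bl ζ ∩ S η).Nonempty}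
      with hFdef
    set ν : Cardinal := (p i).card + χ' + ℵ₀ with hνdef
    have hνinf : ℵ₀ ≤ ν := le_add_self
    have hνlam : ν < lam := by
      have h1 : (p i).card < lam := by
        rw [← Cardinal.lt_ord]; exact hplt i hiθ
      exact Cardinal.add_lt_of_lt hinf (Cardinal.add_lt_of_lt hinf h1 hχ') haleph0lam
    have hsuccν : Order.succ ν < κ := by
      rw [hκdef]; exact Order.succ_lt_succ hνlam
    have hDcard : ∀ β', β' < K → Cardinal.mk (Ds E p i β') ≤
        Cardinal.lift.{1,0} ((p i).card + ℵ₀) := fun β' h => Ds_card (hE2 β' h)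
    have hScard : ∀ η ∈ M, Cardinal.mk (S η) ≤ Cardinal.lift.{1,0} ν := by
      rintro η ⟨a, ha, rfl⟩
      have hbl : bl (sInf a) = a := hblA a ha
      have h1 : Cardinal.mk (S (sInf a)) ≤ Cardinal.mk (⋃ β' ∈ a, Ds E p i β') := by
        apply Cardinal.mk_le_mk_of_subset
        rw [hSdef]
        simp only [hbl]
        exact Set.inter_subset_left
      have hnea : Nonempty ↥a := Set.nonempty_coe_sort.mpr (hane a ha)
      have h2 : Cardinal.mk (⋃ β' ∈ a, Ds E p i β') ≤
          Cardinal.mk a * Cardinal.lift.{1,0} ((p i).card + ℵ₀) := by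
        refine (Cardinal.mk_biUnion_le _ _).trans ?_
        apply mul_le_mul_right
        apply ciSup_le'
        intro β'
        exact hDcard β'.1 ((hA1 a ha).1 β'.2)
      have h3 : Cardinal.mk a = Cardinal.lift.{1,0} χ' := (hA1 a ha).2
      have h4 : χ' * ((p i).card + ℵ₀) ≤ ν := by
        have h5 : χ' ≤ ν := by
          rw [hνdef]
          exact le_add_self.trans (self_le_add_right _ _)
        have h6 : (p i).card + ℵ₀ ≤ ν := by
          rw [hνdef]
          exact add_le_add_left (self_le_add_right _ _) ℵ₀
        calc χ' * ((p i).card + ℵ₀) ≤ ν * ν := mul_le_mul' h5 h6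
          _ = ν := Cardinal.mul_eq_self hνinf
      calc Cardinal.mk (S (sInf a)) ≤ Cardinal.mk (⋃ β' ∈ a, Ds E p i β') := h1
        _ ≤ Cardinal.mk a * Cardinal.lift.{1,0} ((p i).card + ℵ₀) := h2
        _ = Cardinal.lift.{1,0} (χ' * ((p i).card + ℵ₀)) := by
            rw [h3, Cardinal.lift_mul]
        _ ≤ Cardinal.lift.{1,0} ν := Cardinal.lift_le.mpr h4
    have hblM : ∀ ζ ∈ M, bl ζ ∈ A ∧ sInf (bl ζ) = ζ := by
      rintro ζ ⟨a, ha, rfl⟩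
      rw [hblA a ha]; exact ⟨ha, rfl⟩
    have hFcard : ∀ η ∈ M, Cardinal.mk (F η) ≤ Cardinal.lift.{1,0} ν := by
      intro η hη
      have hj : ∀ ζ : ↥(F η), ∃ x, x ∈ bl ζ.1 ∧ x ∈ S η := by
        intro ζ
        obtain ⟨x, hx⟩ := ζ.2.2.2
        exact ⟨x, hx.1, hx.2⟩
      set j : ↥(F η) → ↥(S η) := fun ζ => ⟨(hj ζ).choose, (hj ζ).choose_spec.2⟩ with hjdef
      have hjinj : Function.Injective j := by
        intro ζ₁ ζ₂ heq
        by_contra hne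
        have hne2 : ζ₁.1 ≠ ζ₂.1 := fun h => hne (Subtype.ext h)
        have hb1 := hblM ζ₁.1 ζ₁.2.1
        have hb2 := hblM ζ₂.1 ζ₂.2.1
        have hbne : bl ζ₁.1 ≠ bl ζ₂.1 := by
          intro h
          apply hne2
          rw [← hb1.2, ← hb2.2, h]
        have hdisj := hA2 hb1.1 hb2.1 hbne
        have hx1 := (hj ζ₁).choose_spec.1
        have hx2 := (hj ζ₂).choose_spec.1
        have hvq : (hj ζ₁).choose = (hj ζ₂).choose := congrArg Subtype.val heq
        rw [hvq] at hx1
        exact Set.disjoint_left.mp hdisj hx1 hx2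
      exact (Cardinal.mk_le_of_injective hjinj).trans (hScard η hη)
    have hFsub : ∀ η ∈ M, ∀ ζ ∈ F η, ζ ∈ M ∧ ζ < η := fun η hη ζ hζ => ⟨hζ.1, hζ.2.1⟩
    obtain ⟨bs, hbsK, hYcard⟩ :=
      fodor_lite κ hκinf hreg M hMsub hMcard F hFsub ν hνinf hsuccν hFcard
    set Y : Set Ordinal := {η | η ∈ M ∧ F η ⊆ Set.Iic bs} with hYdef
    set B : Set (Set Ordinal) := {a | a ∈ A ∧ sInf a ∈ Y ∧ bs < sInf a} with hBdef
    refine ⟨B, fun a ha => ha.1, ?_, ?_⟩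
    · -- HasCard B κ
      have h1 : sInf '' B = Y ∩ Set.Ioi bs := by
        apply Set.eq_of_subset_of_subset
        · rintro x ⟨a, ⟨haA, haY, haβ⟩, rfl⟩
          exact ⟨haY, haβ⟩
        · rintro x ⟨hxY, hxβ⟩
          obtain ⟨a, ha, rfl⟩ := hxY.1
          exact ⟨a, ⟨ha, hxY, hxβ⟩, rfl⟩
      have h2 : Cardinal.mk B = Cardinal.mk (Y ∩ Set.Ioi bs : Set Ordinal) := by
        rw [← h1,
          Cardinal.mk_image_eq_of_injOn _ _ (hmininj.mono (fun a (ha : a ∈ B) => ha.1))]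
      rw [HasCard, h2]
      apply le_antisymm
      · rw [← hYcard]
        exact Cardinal.mk_le_mk_of_subset Set.inter_subset_left
      · by_contra hlt
        push_neg at hlt
        have hsplit : Y ⊆ (Y ∩ Set.Ioi bs) ∪ (Y ∩ Set.Iic bs) := by
          intro x hx
          rcases le_or_gt x bs with h | h
          · exact Or.inr ⟨hx, h⟩
          · exact Or.inl ⟨hx, h⟩
        have hk1 : Cardinal.mk (Y ∩ Set.Iic bs : Set Ordinal) < Cardinal.lift.{1,0} κ :=
          (Cardinal.mk_le_mk_of_subset Set.inter_subset_right).trans_lt (mk_Iic_lt hκinf hbsK)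
        have hinfk : (ℵ₀ : Cardinal.{1}) ≤ Cardinal.lift.{1,0} κ := by
          rw [← Cardinal.lift_aleph0.{1,0}]
          exact Cardinal.lift_le.mpr hκinf
        have h5 := (Cardinal.mk_le_mk_of_subset hsplit).trans (Cardinal.mk_union_le _ _)
        have h6 := h5.trans_lt (Cardinal.add_lt_of_lt hinfk hlt hk1)
        rw [hYcard] at h6
        exact absurd h6 (lt_irrefl _)
    · -- the pair coloring condition
      intro a ha b hb hlt α hα β hβ
      have haA := ha.1
      have hbA := hb.1
      have hbne := hane b hbA
      have hαβ : α < β := hlt α hα β hβ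
      have hβK : β < K := (hA1 b hbA).1 hβ
      by_contra hle
      push_neg at hle
      have hmem : α ∈ Ds E p i β := (hcle α β i hαβ hβK hiθ).mp hle
      have hαinfb : α < sInf b := hlt α hα (sInf b) (csInf_mem hbne)
      have hαS : α ∈ S (sInf b) := by
        refine ⟨Set.mem_biUnion ?_ hmem, hαinfb⟩
        rw [hblA b hbA]
        exact hβ
      have hinfa_lt : sInf a < sInf b := hlt _ (csInf_mem (hane a haA)) _ (csInf_mem hbne)
      have hFmem : sInf a ∈ F (sInf b) := by
        refine ⟨⟨a, haA, rfl⟩, hinfa_lt, ⟨α, ?_, hαS⟩⟩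
        rw [hblA a haA]
        exact hα
      have h5 : sInf a ≤ bs := hb.2.1.2 hFmem
      exact absurd ha.2.2 (not_lt.mpr h5)
end
end

section
/- Suppose θ ∈ reg(κ), χ < κ, and c : [κ]² → θ witnesses U(κ, 2, θ, χ). Then for every infinite cardinal θ' < min(χ, θ), the tree T(c) admits no θ'-ascending path: there is no sequence ⟨f_α : α < κ⟩ with each f_α : θ' → T_α (where T_α = T(c) ∩ ^α θ) such that for all α < β < κ there exist j, j' < θ' with f_α(j) ⊆ f_β(j'). -/
open Cardinal Set Ordinal

noncomputable section

/-! ### Auxiliary machinery -/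

/-- A fast-growing sequence of "closure points" for `m`. -/
def StmtESeq (m : Ordinal.{0} → Ordinal.{0}) (ι : Ordinal.{0}) : Ordinal.{0} :=
  (Ordinal.bsup.{0, 0} ι fun x _ => max (StmtESeq m x) (m (StmtESeq m x))) + 1
termination_by ι
decreasing_by all_goals assumption

lemma StmtESeq_def (m : Ordinal.{0} → Ordinal.{0}) (ι : Ordinal.{0}) :
    StmtESeq m ι = (Ordinal.bsup.{0, 0} ι fun x _ => max (StmtESeq m x) (m (StmtESeq m x))) + 1 := by
  rw [StmtESeq]

lemma StmtESeq_mono {m : Ordinal.{0} → Ordinal.{0}} {ι ι' : Ordinal.{0}} (h : ι < ι') :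
    max (StmtESeq m ι) (m (StmtESeq m ι)) < StmtESeq m ι' := by
  rw [StmtESeq_def m ι']
  have := Ordinal.le_bsup (fun x (_ : x < ι') => max (StmtESeq m x) (m (StmtESeq m x))) ι h
  rw [Ordinal.add_one_eq_succ, Order.lt_succ_iff]
  exact this

lemma StmtESeq_lt_ord {κ : Cardinal.{0}} (hκ : κ.IsRegular)
    {m : Ordinal.{0} → Ordinal.{0}} (hm : ∀ x < κ.ord, m x < κ.ord) :
    ∀ ι < κ.ord, StmtESeq m ι < κ.ord := by
  intro ι
  induction ι using Ordinal.induction with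
  | _ ι IH =>
    intro hι
    rw [StmtESeq_def]
    have hb : (Ordinal.bsup.{0,0} ι fun x _ => max (StmtESeq m x) (m (StmtESeq m x))) < κ.ord := by
      refine Cardinal.bsup_lt_ord_of_isRegular hκ (Cardinal.lt_ord.1 hι) ?_
      intro x hx
      have h1 : StmtESeq m x < κ.ord := IH x hx (hx.trans hι)
      exact max_lt h1 (hm _ h1)
    rw [Ordinal.add_one_eq_succ]
    exact (Cardinal.isSuccLimit_ord hκ.aleph0_le).succ_lt hb

/-- A pigeonhole lemma: a set of ordinals of size `≥ κ` partitioned into fewer than `κ`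
pieces has a piece of size `≥ κ`. -/
lemma StmtPigeonhole (κ : Cardinal.{0}) (hκ : κ.IsRegular) (Λ : Ordinal.{0})
    (hΛ : Λ.card < κ) (S : Set Ordinal.{0}) (hS : Cardinal.lift.{1} κ ≤ Cardinal.mk S)
    (f : Ordinal.{0} → Ordinal.{0}) (hf : ∀ x ∈ S, f x < Λ) :
    ∃ v, Cardinal.lift.{1} κ ≤ Cardinal.mk {x : Ordinal.{0} | x ∈ S ∧ f x = v} := by
  by_contra hcon
  push_neg at hcon
  have hreg : (Cardinal.lift.{1} κ).IsRegular := by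
    refine ⟨Cardinal.aleph0_le_lift.2 hκ.1, ?_⟩
    rw [← Cardinal.lift_ord, ← Ordinal.lift_cof, hκ.cof_eq]
  have hsub : S ⊆ ⋃ v : Set.Iio Λ, {x : Ordinal.{0} | x ∈ S ∧ f x = v.1} := by
    intro x hx
    exact Set.mem_iUnion.2 ⟨⟨f x, hf x hx⟩, hx, rfl⟩
  have h1 : Cardinal.mk S ≤ Cardinal.mk (Set.Iio Λ) *
      ⨆ v : Set.Iio Λ, Cardinal.mk {x : Ordinal.{0} | x ∈ S ∧ f x = v.1} :=
    le_trans (Cardinal.mk_le_mk_of_subset hsub) (Cardinal.mk_iUnion_le _)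
  have h2 : Cardinal.mk (Set.Iio Λ) < Cardinal.lift.{1} κ := by
    rw [Ordinal.mk_Iio_ordinal]
    exact Cardinal.lift_lt.2 hΛ
  have h3 : (⨆ v : Set.Iio Λ, Cardinal.mk {x : Ordinal.{0} | x ∈ S ∧ f x = v.1}) <
      Cardinal.lift.{1} κ :=
    Cardinal.iSup_lt_of_isRegular hreg h2 fun v => hcon v.1
  exact absurd (hS.trans h1) (not_le.2 (Cardinal.mul_lt_of_lt hreg.1 h2 h3))

theorem stmt19 (κ θ χ θ' : Cardinal) (c : Ordinal → Ordinal → Ordinal)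
    (hκreg : κ.IsRegular) (hκunc : ℵ₀ < κ)
    (hθreg : θ.IsRegular) (hθκ : θ < κ) (hχκ : χ < κ)
    (hc : WitnessU κ 2 θ χ c)
    (hθ'1 : ℵ₀ ≤ θ') (hθ'2 : θ' < χ) (hθ'3 : θ' < θ) :
    -- `T(c)` admits no `θ'`-ascending path, where the `j`-th node of the path at
    -- level `α` is `c (·, g α j) ↾ α` for a witness `g α j ∈ [α, κ)`.
    ¬ ∃ g : Ordinal → Ordinal → Ordinal,
      (∀ α < κ.ord, ∀ j < θ'.ord, α ≤ g α j ∧ g α j < κ.ord) ∧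
      ∀ α β : Ordinal, α < β → β < κ.ord →
        ∃ j < θ'.ord, ∃ j' < θ'.ord, ∀ ξ < α, c ξ (g α j) = c ξ (g β j') := by
  rintro ⟨g, hg1, hg2⟩
  -- basic facts
  have hθ'κ : θ' < κ := hθ'3.trans hθκ
  have hT'K : θ'.ord < κ.ord := Cardinal.ord_lt_ord.2 hθ'κ
  have hT'pos : (0 : Ordinal) < θ'.ord := by
    rw [Cardinal.lt_ord, Ordinal.card_zero]
    exact Cardinal.aleph0_pos.trans_le hθ'1
  have hKlim : Order.IsSuccLimit κ.ord := Cardinal.isSuccLimit_ord hκreg.aleph0_le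
  -- the bounding function `M`
  set M : Ordinal → Ordinal :=
    fun α => (Ordinal.bsup.{0,0} θ'.ord fun j _ => g α j) + 1 with hM
  have hcardT' : (θ'.ord).card = θ' := Cardinal.card_ord θ'
  have hMlt : ∀ α < κ.ord, M α < κ.ord := by
    intro α hα
    have hb : (Ordinal.bsup.{0,0} θ'.ord fun j _ => g α j) < κ.ord := by
      refine Cardinal.bsup_lt_ord_of_isRegular hκreg (by rw [hcardT']; exact hθ'κ) ?_
      intro j hj
      exact (hg1 α hα j hj).2
    show (Ordinal.bsup.{0,0} θ'.ord fun j _ => g α j) + 1 < κ.ord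
    rw [Ordinal.add_one_eq_succ]
    exact hKlim.succ_lt hb
  have hma : ∀ α, ∀ j < θ'.ord, g α j < M α := by
    intro α j hj
    have := Ordinal.le_bsup (fun j (_ : j < θ'.ord) => g α j) j hj
    show g α j < (Ordinal.bsup.{0,0} θ'.ord fun j _ => g α j) + 1
    rw [Ordinal.add_one_eq_succ, Order.lt_succ_iff]
    exact this
  -- the sup of colors function
  set F : Ordinal → Ordinal := fun α => Ordinal.bsup.{0,0} θ'.ord
    (fun j₁ _ => Ordinal.bsup.{0,0} θ'.ord fun j₂ _ => c (g α j₁) (g (M α) j₂)) with hF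
  have hFcol : ∀ α < κ.ord, ∀ j₁ < θ'.ord, ∀ j₂ < θ'.ord,
      c (g α j₁) (g (M α) j₂) < θ.ord := by
    intro α hα j₁ hj₁ j₂ hj₂
    have hMα := hMlt α hα
    have hlt : g α j₁ < g (M α) j₂ := (hma α j₁ hj₁).trans_le (hg1 (M α) hMα j₂ hj₂).1
    exact hc.1 _ _ hlt (hg1 (M α) hMα j₂ hj₂).2
  have hFlt : ∀ α < κ.ord, F α < θ.ord := by
    intro α hα
    refine Cardinal.bsup_lt_ord_of_isRegular hθreg (by rw [hcardT']; exact hθ'3) ?_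
    intro j₁ hj₁
    refine Cardinal.bsup_lt_ord_of_isRegular hθreg (by rw [hcardT']; exact hθ'3) ?_
    intro j₂ hj₂
    exact hFcol α hα j₁ hj₁ j₂ hj₂
  have hFle : ∀ α, ∀ j₁ < θ'.ord, ∀ j₂ < θ'.ord, c (g α j₁) (g (M α) j₂) ≤ F α := by
    intro α j₁ hj₁ j₂ hj₂
    refine le_trans ?_ (Ordinal.le_bsup _ j₁ hj₁)
    exact Ordinal.le_bsup (fun j₂ (_ : j₂ < θ'.ord) => c (g α j₁) (g (M α) j₂)) j₂ hj₂
  -- the fast-growing sequence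
  set e : Ordinal → Ordinal := StmtESeq M with he
  have heK : ∀ ι < κ.ord, e ι < κ.ord := StmtESeq_lt_ord hκreg hMlt
  have heMono : ∀ ι ι' : Ordinal, ι < ι' → M (e ι) < e ι' := by
    intro ι ι' h
    exact (le_max_right _ _).trans_lt (StmtESeq_mono h)
  have heMono' : ∀ ι ι' : Ordinal, ι < ι' → e ι < e ι' := by
    intro ι ι' h
    exact (le_max_left _ _).trans_lt (StmtESeq_mono h)
  -- the sets of the family
  set a : Ordinal → Set Ordinal := fun α => g α '' Set.Iio θ'.ord with ha
  have haLT : ∀ ι ι' : Ordinal, ι < ι' → ι' < κ.ord → SetLT (a (e ι)) (a (e ι')) := by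
    rintro ι ι' h hι' γ ⟨j, hj, rfl⟩ δ ⟨j', hj', rfl⟩
    calc g (e ι) j < M (e ι) := hma _ j hj
    _ < e ι' := heMono ι ι' h
    _ ≤ g (e ι') j' := (hg1 (e ι') (heK ι' hι') j' hj').1
  -- cardinalities of the sets
  have hex : ∀ ι : Ordinal, ∃ v : Cardinal.{0},
      Cardinal.mk (a (e ι)) = Cardinal.lift.{1} v ∧ v ≤ θ' := by
    intro ι
    have hb : Cardinal.mk (a (e ι)) ≤ Cardinal.lift.{1} θ' := by
      refine le_trans Cardinal.mk_image_le ?_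
      rw [Ordinal.mk_Iio_ordinal, hcardT']
    obtain ⟨v, hv⟩ := Cardinal.mem_range_lift_of_le hb
    exact ⟨v, hv.symm, Cardinal.lift_le.1 (hv.symm ▸ hb)⟩
  choose νf hν1 hν2 using hex
  -- first pigeonhole: fix the cardinality
  have hIioK : Cardinal.mk (Set.Iio κ.ord) = Cardinal.lift.{1} κ := by
    rw [Ordinal.mk_Iio_ordinal, Cardinal.card_ord]
  have hsuccT' : θ'.ord + 1 < κ.ord := by
    rw [Ordinal.add_one_eq_succ]; exact hKlim.succ_lt hT'K
  obtain ⟨v₁, hv₁⟩ := StmtPigeonhole κ hκreg (θ'.ord + 1) (Cardinal.lt_ord.1 hsuccT')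
    (Set.Iio κ.ord) hIioK.ge (fun ι => (νf ι).ord)
    (fun ι _ => by
      rw [Ordinal.add_one_eq_succ, Order.lt_succ_iff]
      exact Cardinal.ord_le_ord.2 (hν2 ι))
  -- second pigeonhole: fix the sup of colors
  obtain ⟨i₀, hi₀⟩ := StmtPigeonhole κ hκreg θ.ord
    (by rw [Cardinal.card_ord]; exact hθκ)
    {x | x ∈ Set.Iio κ.ord ∧ (νf x).ord = v₁} hv₁ (fun ι => F (e ι))
    (fun ι hι => hFlt (e ι) (heK ι hι.1))
  -- extract a subset of size exactly κ
  obtain ⟨J, hJsub, hJcard⟩ := Cardinal.le_mk_iff_exists_subset.1 hi₀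
  have hJmem : ∀ ι ∈ J, ι < κ.ord ∧ (νf ι).ord = v₁ ∧ F (e ι) = i₀ := by
    intro ι hι
    obtain ⟨⟨h1, h2⟩, h3⟩ := hJsub hι
    exact ⟨h1, h2, h3⟩
  have hJne : J.Nonempty := by
    rw [← Set.nonempty_coe_sort, ← Cardinal.mk_ne_zero_iff, hJcard]
    simpa [Cardinal.lift_eq_zero] using hκreg.pos.ne'
  obtain ⟨ι₀, hι₀⟩ := hJne
  set ν₀ : Cardinal.{0} := νf ι₀ with hν₀
  have hνconst : ∀ ι ∈ J, νf ι = ν₀ := by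
    intro ι hι
    exact Cardinal.ord_injective (((hJmem ι hι).2.1).trans ((hJmem ι₀ hι₀).2.1).symm)
  have hi₀θ : i₀ < θ.ord := by
    rw [← (hJmem ι₀ hι₀).2.2]
    exact hFlt (e ι₀) (heK ι₀ (hJmem ι₀ hι₀).1)
  -- the disjoint family
  set A : Set (Set Ordinal) := (fun ι => a (e ι)) '' J with hA
  have hInj : Set.InjOn (fun ι => a (e ι)) J := by
    intro ι hι ι' hι' heq0
    have heq : a (e ι) = a (e ι') := heq0
    by_contra hne
    rcases lt_or_gt_of_ne hne with h | h
    · have hmem : g (e ι') 0 ∈ a (e ι') := ⟨0, hT'pos, rfl⟩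
      have hmem' : g (e ι') 0 ∈ a (e ι) := by rw [heq]; exact hmem
      exact absurd (haLT ι ι' h (hJmem ι' hι').1 _ hmem' _ hmem) (lt_irrefl _)
    · have hmem : g (e ι) 0 ∈ a (e ι) := ⟨0, hT'pos, rfl⟩
      have hmem' : g (e ι) 0 ∈ a (e ι') := by rw [← heq]; exact hmem
      exact absurd (haLT ι' ι h (hJmem ι hι).1 _ hmem' _ hmem) (lt_irrefl _)
  have hFam : IsDisjFamily κ ν₀ A := by
    refine ⟨?_, ?_, ?_⟩
    · rintro b ⟨ι, hι, rfl⟩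
      constructor
      · rintro γ ⟨j, hj, rfl⟩
        exact (hg1 (e ι) (heK ι (hJmem ι hι).1) j hj).2
      · show Cardinal.mk _ = _
        rw [← hνconst ι hι]
        exact hν1 ι
    · rintro x ⟨ι, hι, rfl⟩ y ⟨ι', hι', rfl⟩ hxy
      have hne : ι ≠ ι' := fun h => hxy (by rw [h])
      rw [Function.onFun, Set.disjoint_left]
      rintro γ hγ hγ'
      rcases lt_or_gt_of_ne hne with h | h
      · exact absurd (haLT ι ι' h (hJmem ι' hι').1 γ hγ γ hγ') (lt_irrefl _)
      · exact absurd (haLT ι' ι h (hJmem ι hι).1 γ hγ' γ hγ) (lt_irrefl _)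
    · show Cardinal.mk _ = _
      rw [hA, Cardinal.mk_image_eq_of_injOn _ _ hInj, hJcard]
  -- apply the witness
  have hν₀χ : ν₀ < χ := lt_of_le_of_lt (hν2 ι₀) hθ'2
  obtain ⟨B, hBA, hB2, hBcol⟩ := hc.2 ν₀ hν₀χ A hFam i₀ hi₀θ
  -- two distinct elements of B
  have hBnt : Nontrivial (↥B) := by
    rw [← Cardinal.one_lt_iff_nontrivial]
    show (1 : Cardinal.{1}) < _
    rw [hB2]
    have : ((1 : Cardinal.{0}) : Cardinal.{0}) < 2 := one_lt_two
    calc (1 : Cardinal.{1}) = Cardinal.lift.{1} 1 := by rw [Cardinal.lift_one]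
    _ < Cardinal.lift.{1} 2 := Cardinal.lift_lt.2 one_lt_two
  obtain ⟨⟨x, hx⟩, ⟨y, hy⟩, hxy⟩ := hBnt.exists_pair_ne
  have hxyne : x ≠ y := fun h => hxy (Subtype.ext h)
  -- the key contradiction
  have main : ∀ ι ∈ J, ∀ ι' ∈ J, ι < ι' → a (e ι) ∈ B → a (e ι') ∈ B → False := by
    intro ι hι ι' hι' hlt hxB hyB
    have hβK : e ι' < κ.ord := heK ι' (hJmem ι' hι').1
    have hMβ : M (e ι) < e ι' := heMono ι ι' hlt
    obtain ⟨j, hj, j', hj', hagree⟩ := hg2 (M (e ι)) (e ι') hMβ hβK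
    set ξ : Ordinal := g (e ι) 0 with hξdef
    have hξ : ξ < M (e ι) := hma (e ι) 0 hT'pos
    have key1 : c ξ (g (e ι') j') = c ξ (g (M (e ι)) j) := (hagree ξ hξ).symm
    have key2 : c ξ (g (M (e ι)) j) ≤ i₀ := by
      rw [← (hJmem ι hι).2.2]
      exact hFle (e ι) 0 hT'pos j hj
    have key3 : i₀ < c ξ (g (e ι') j') := by
      refine hBcol _ hxB _ hyB (haLT ι ι' hlt (hJmem ι' hι').1) ξ ⟨0, hT'pos, rfl⟩
        (g (e ι') j') ⟨j', hj', rfl⟩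
    rw [key1] at key3
    exact absurd key2 (not_le.2 key3)
  obtain ⟨ι₁, hι₁, rfl⟩ := hBA hx
  obtain ⟨ι₂, hι₂, rfl⟩ := hBA hy
  have hne12 : ι₁ ≠ ι₂ := fun h => hxyne (by rw [h])
  rcases lt_or_gt_of_ne hne12 with h | h
  · exact main ι₁ hι₁ ι₂ hι₂ h hx hy
  · exact main ι₂ hι₂ ι₁ hι₁ h hy hx
end
end
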